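/- arXiv:1510.02808 — 8 statements merged into one kernel-verified Lean document; each statement's English description precedes it below -/
import Mathlib

section
/- Let n ≥ 2 and let {μ(t)}_{t=0}^∞ be a sequence in the open unit simplex Δ_n satisfying Assumption (M). Let Θ be a subset of L^∞(Δ_n, Δ̄_n) (portfolio maps with the supremum metric and its induced topology) that is totally bounded in the supremum metric, such that the evaluation map (p, π) ↦ π(p) is jointly measurable. Suppose that for every π ∈ Θ the asymptotic growth rate W(π) = lim_{t→∞} (1/t) log V_π(t) exists, and that the initial distribution ν_0 is a Borel probability measure on Θ with full support. Then the sequence {ν_t}_{t=0}^∞ of wealth distributions satisfies the large deviation principle on Θ with rate function I(π) = W* − W(π), where W* = sup_{π ∈ Θ} W(π). -/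
open MeasureTheory Filter Topology Finset
open scoped UniformConvergence ENNReal Uniformity

noncomputable section


/-- The open unit simplex in `ℝⁿ`. -/
def oS (n : ℕ) : Set (Fin n → ℝ) := {p | (∀ i, 0 < p i) ∧ ∑ i, p i = 1}

/-- The closed unit simplex in `ℝⁿ`. -/
def cS (n : ℕ) : Set (Fin n → ℝ) := {p | (∀ i, 0 ≤ p i) ∧ ∑ i, p i = 1}

/-- Relative value of a (time-dependent) weight sequence `w` along market path `μ`. -/
def relV {n : ℕ} (μ w : ℕ → Fin n → ℝ) : ℕ → ℝ
  | 0 => 1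
  | t + 1 => relV μ w t * ∑ i, w t i * (μ (t + 1) i / μ t i)

/-- Relative value of a portfolio map. -/
def pV {n : ℕ} (μ : ℕ → ↥(oS n)) (π : ↥(oS n) → ↥(cS n)) : ℕ → ℝ :=
  relV (fun t => (μ t : Fin n → ℝ)) (fun t => (π (μ t) : Fin n → ℝ))

/-- Assumption (M): relative returns bounded between `1/M` and `M`. -/
def AssumptionM {n : ℕ} (M : ℝ) (μ : ℕ → ↥(oS n)) : Prop :=
  ∀ t i, 1 / M ≤ (μ (t + 1) : Fin n → ℝ) i / (μ t : Fin n → ℝ) i ∧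
    (μ (t + 1) : Fin n → ℝ) i / (μ t : Fin n → ℝ) i ≤ M

/-- Normalized wealth distribution `ν_t(B) = (∫_B V dν₀)/(∫ V dν₀)`. -/
def wd {T : Type*} [MeasurableSpace T] (ν0 : Measure T) (V : T → ℝ) : Measure T :=
  (ν0.withDensity (fun x => ENNReal.ofReal (V x)) Set.univ)⁻¹ •
    ν0.withDensity fun x => ENNReal.ofReal (V x)

/-- Portfolio maps `Δₙ → Δ̄ₙ` with the topology (uniformity) of uniform convergence,
i.e. of the supremum metric. -/
abbrev PMap (n : ℕ) := ↥(oS n) →ᵤ ↥(cS n)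

instance {n : ℕ} : MeasurableSpace (PMap n) := borel _


instance {n : ℕ} : BorelSpace (PMap n) := ⟨rfl⟩

namespace LDPAux

variable {n : ℕ} {M : ℝ} {μ : ℕ → ↥(oS n)}

/-- one-step return. -/
def ret (μ : ℕ → ↥(oS n)) (π : ↥(oS n) → ↥(cS n)) (t : ℕ) : ℝ :=
  ∑ i, (π (μ t) : Fin n → ℝ) i * ((μ (t + 1) : Fin n → ℝ) i / (μ t : Fin n → ℝ) i)

lemma pV_succ (π : ↥(oS n) → ↥(cS n)) (t : ℕ) :
    pV μ π (t + 1) = pV μ π t * ret μ π t := rfl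

lemma pV_zero (π : ↥(oS n) → ↥(cS n)) : pV μ π 0 = 1 := rfl

lemma ret_bounds (hAM : AssumptionM M μ) (π : ↥(oS n) → ↥(cS n)) (t : ℕ) :
    1 / M ≤ ret μ π t ∧ ret μ π t ≤ M := by
  obtain ⟨hnn, hsum⟩ := (π (μ t)).2
  constructor
  · calc 1 / M = ∑ i, (π (μ t) : Fin n → ℝ) i * (1 / M) := by
          rw [← Finset.sum_mul, hsum, one_mul]
      _ ≤ ret μ π t :=
        Finset.sum_le_sum fun i _ => mul_le_mul_of_nonneg_left (hAM t i).1 (hnn i)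
  · calc ret μ π t ≤ ∑ i, (π (μ t) : Fin n → ℝ) i * M :=
        Finset.sum_le_sum fun i _ => mul_le_mul_of_nonneg_left (hAM t i).2 (hnn i)
      _ = M := by rw [← Finset.sum_mul, hsum, one_mul]

lemma pV_bounds (hM : 0 < M) (hAM : AssumptionM M μ) (π : ↥(oS n) → ↥(cS n)) (t : ℕ) :
    (1 / M) ^ t ≤ pV μ π t ∧ pV μ π t ≤ M ^ t := by
  induction t with
  | zero => simp [pV_zero]
  | succ t ih =>
    have h1 : (0:ℝ) < 1 / M := by positivity
    have hb := ret_bounds hAM π t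
    have hpos : 0 < pV μ π t := lt_of_lt_of_le (by positivity) ih.1
    constructor
    · rw [pV_succ, pow_succ]
      exact mul_le_mul ih.1 hb.1 h1.le hpos.le
    · rw [pV_succ, pow_succ]
      exact mul_le_mul ih.2 hb.2 (le_trans h1.le hb.1) (by positivity)

lemma pV_pos (hM : 0 < M) (hAM : AssumptionM M μ) (π : ↥(oS n) → ↥(cS n)) (t : ℕ) :
    0 < pV μ π t :=
  lt_of_lt_of_le (by positivity) (pV_bounds hM hAM π t).1

lemma ret_lip (hM : 0 < M) (hAM : AssumptionM M μ) {π π' : ↥(oS n) → ↥(cS n)} {ε : ℝ}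
    (hε : 0 ≤ ε) (hd : ∀ p i, |(π p : Fin n → ℝ) i - (π' p : Fin n → ℝ) i| ≤ ε) (t : ℕ) :
    ret μ π t ≤ ret μ π' t * (1 + n * M ^ 2 * ε) := by
  have hr : ∀ i : Fin n, 0 ≤ (μ (t + 1) : Fin n → ℝ) i / (μ t : Fin n → ℝ) i :=
    fun i => le_trans (by positivity) (hAM t i).1
  have h1 : ret μ π t - ret μ π' t ≤ n * ε * M := by
    have : ret μ π t - ret μ π' t = ∑ i, ((π (μ t) : Fin n → ℝ) i - (π' (μ t) : Fin n → ℝ) i)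
        * ((μ (t + 1) : Fin n → ℝ) i / (μ t : Fin n → ℝ) i) := by
      rw [ret, ret, ← Finset.sum_sub_distrib]
      exact Finset.sum_congr rfl fun i _ => by ring
    rw [this]
    calc ∑ i, ((π (μ t) : Fin n → ℝ) i - (π' (μ t) : Fin n → ℝ) i)
        * ((μ (t + 1) : Fin n → ℝ) i / (μ t : Fin n → ℝ) i)
        ≤ ∑ _i : Fin n, ε * M := by
          refine Finset.sum_le_sum fun i _ => ?_
          calc ((π (μ t) : Fin n → ℝ) i - (π' (μ t) : Fin n → ℝ) i)
              * ((μ (t + 1) : Fin n → ℝ) i / (μ t : Fin n → ℝ) i)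
              ≤ |(π (μ t) : Fin n → ℝ) i - (π' (μ t) : Fin n → ℝ) i|
                * ((μ (t + 1) : Fin n → ℝ) i / (μ t : Fin n → ℝ) i) :=
                mul_le_mul_of_nonneg_right (le_abs_self _) (hr i)
            _ ≤ ε * M := mul_le_mul (hd (μ t) i) (hAM t i).2 (hr i) hε
      _ = n * ε * M := by simp [Finset.sum_const, mul_assoc]
  have h2 : n * ε * M ≤ ret μ π' t * (n * M ^ 2 * ε) := by
    have hret : 1 / M ≤ ret μ π' t := (ret_bounds hAM π' t).1
    have : n * ε * M = (1 / M) * (n * M ^ 2 * ε) := by field_simp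
    rw [this]
    exact mul_le_mul_of_nonneg_right hret (by positivity)
  nlinarith [h1, h2]

lemma pV_lip (hM : 0 < M) (hAM : AssumptionM M μ) {π π' : ↥(oS n) → ↥(cS n)} {ε : ℝ}
    (hε : 0 ≤ ε) (hd : ∀ p i, |(π p : Fin n → ℝ) i - (π' p : Fin n → ℝ) i| ≤ ε) (t : ℕ) :
    pV μ π t ≤ pV μ π' t * (1 + n * M ^ 2 * ε) ^ t := by
  induction t with
  | zero => simp [pV_zero]
  | succ t ih =>
    rw [pV_succ, pV_succ, pow_succ]
    have h1 : 0 < pV μ π' t := pV_pos hM hAM π' t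
    have h2 : (0:ℝ) ≤ 1 + n * M ^ 2 * ε := by positivity
    calc pV μ π t * ret μ π t
        ≤ (pV μ π' t * (1 + n * M ^ 2 * ε) ^ t) * (ret μ π' t * (1 + n * M ^ 2 * ε)) := by
          refine mul_le_mul ih (ret_lip hM hAM hε hd t) ?_ ?_
          · exact le_trans (by positivity) (ret_bounds hAM π t).1
          · positivity
      _ = pV μ π' t * ret μ π' t * ((1 + n * M ^ 2 * ε) ^ t * (1 + n * M ^ 2 * ε)) := by ring

lemma log_pV_lip (hM : 0 < M) (hAM : AssumptionM M μ) {π π' : ↥(oS n) → ↥(cS n)} {ε : ℝ}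
    (hε : 0 ≤ ε) (hd : ∀ p i, |(π p : Fin n → ℝ) i - (π' p : Fin n → ℝ) i| ≤ ε) (t : ℕ) :
    Real.log (pV μ π t) ≤ Real.log (pV μ π' t) + t * (n * M ^ 2 * ε) := by
  have h1 : 0 < pV μ π t := pV_pos hM hAM π t
  have h2 : 0 < pV μ π' t := pV_pos hM hAM π' t
  have h3 : (0:ℝ) < 1 + n * M ^ 2 * ε := by positivity
  calc Real.log (pV μ π t) ≤ Real.log (pV μ π' t * (1 + n * M ^ 2 * ε) ^ t) :=
        Real.log_le_log h1 (pV_lip hM hAM hε hd t)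
    _ = Real.log (pV μ π' t) + t * Real.log (1 + n * M ^ 2 * ε) := by
        rw [Real.log_mul (ne_of_gt h2) (by positivity), Real.log_pow]
    _ ≤ Real.log (pV μ π' t) + t * (n * M ^ 2 * ε) := by
        have := Real.log_le_sub_one_of_pos h3
        have ht : (0:ℝ) ≤ t := Nat.cast_nonneg t
        nlinarith

end LDPAux


open LDPAux

lemma ereal_mul_le_coe {a x : ℝ} (ha : 0 < a) {y : EReal} (h : y ≤ (x : ℝ)) :
    (a : EReal) * y ≤ ((a * x : ℝ) : EReal) := by
  induction y using EReal.rec with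
  | bot => rw [EReal.coe_mul_bot_of_pos ha]; exact bot_le
  | coe y =>
      rw [← EReal.coe_mul]
      exact EReal.coe_le_coe_iff.2 (mul_le_mul_of_nonneg_left (EReal.coe_le_coe_iff.1 h) ha.le)
  | top => exact absurd h (EReal.coe_lt_top x).not_ge

lemma ereal_coe_le_mul {a x : ℝ} (ha : 0 < a) {y : EReal} (h : (x : ℝ) ≤ y) :
    ((a * x : ℝ) : EReal) ≤ (a : EReal) * y := by
  induction y using EReal.rec with
  | bot => exact absurd h (EReal.bot_lt_coe x).not_ge
  | coe y =>
      rw [← EReal.coe_mul]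
      exact EReal.coe_le_coe_iff.2 (mul_le_mul_of_nonneg_left (EReal.coe_le_coe_iff.1 h) ha.le)
  | top => rw [EReal.coe_mul_top_of_pos ha]; exact le_top

set_option maxHeartbeats 1000000 in
theorem abstract_ldp {X : Type*} [TopologicalSpace X] [MeasurableSpace X] [BorelSpace X]
    (ν0 : Measure X) [IsProbabilityMeasure ν0]
    (hsupp : ∀ U : Set X, IsOpen U → U.Nonempty → 0 < ν0 U)
    (V : ℕ → X → ℝ) (hVpos : ∀ t x, 0 < V t x)
    (W : X → ℝ) (hWc : Continuous W) (hWbdd : BddAbove (Set.range W))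
    (hunif : ∀ δ : ℝ, 0 < δ → ∀ᶠ t : ℕ in atTop, ∀ x, |Real.log (V t x) / t - W x| ≤ δ) :
    (∀ F : Set X, IsClosed F →
      limsup (fun t : ℕ => (((t : ℝ)⁻¹ : ℝ) : EReal) * ENNReal.log (wd ν0 (V t) F)) atTop
        ≤ -(⨅ x ∈ F, (((⨆ x', W x') - W x : ℝ) : EReal))) ∧
    (∀ G : Set X, IsOpen G →
      -(⨅ x ∈ G, (((⨆ x', W x') - W x : ℝ) : EReal)) ≤
        liminf (fun t : ℕ => (((t : ℝ)⁻¹ : ℝ) : EReal) * ENNReal.log (wd ν0 (V t) G)) atTop) := by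
  have hXne : Nonempty X := MeasureTheory.Measure.nonempty_of_neZero ν0
  set Ws : ℝ := ⨆ x', W x' with hWs
  have hWle : ∀ x, W x ≤ Ws := fun x => le_ciSup hWbdd x
  -- pointwise exponential bounds
  have keyU : ∀ (t : ℕ), 1 ≤ t → ∀ (x : X) (c : ℝ),
      Real.log (V t x) / t ≤ c → V t x ≤ Real.exp (t * c) := by
    intro t ht x c h
    have htpos : (0 : ℝ) < t := by exact_mod_cast ht
    rw [← Real.exp_log (hVpos t x)]
    apply Real.exp_le_exp.2
    have := (div_le_iff₀ htpos).1 h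
    linarith
  have keyL : ∀ (t : ℕ), 1 ≤ t → ∀ (x : X) (c : ℝ),
      c ≤ Real.log (V t x) / t → Real.exp (t * c) ≤ V t x := by
    intro t ht x c h
    have htpos : (0 : ℝ) < t := by exact_mod_cast ht
    rw [← Real.exp_log (hVpos t x)]
    apply Real.exp_le_exp.2
    have := (le_div_iff₀ htpos).1 h
    linarith
  -- wd as ratio of lintegrals
  have hwd : ∀ (t : ℕ) (B : Set X), MeasurableSet B →
      wd ν0 (V t) B = (∫⁻ x, ENNReal.ofReal (V t x) ∂ν0)⁻¹ *
        ∫⁻ x in B, ENNReal.ofReal (V t x) ∂ν0 := by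
    intro t B hB
    rw [wd, Measure.smul_apply, withDensity_apply _ hB, withDensity_apply _ MeasurableSet.univ,
      Measure.restrict_univ, smul_eq_mul]
  -- denominator upper bound
  have hZub : ∀ δ : ℝ, 0 < δ → ∀ᶠ t : ℕ in atTop,
      (∫⁻ x, ENNReal.ofReal (V t x) ∂ν0) ≤ ENNReal.ofReal (Real.exp (t * (Ws + δ))) := by
    intro δ hδ
    filter_upwards [hunif δ hδ, eventually_ge_atTop 1] with t ht ht1
    calc (∫⁻ x, ENNReal.ofReal (V t x) ∂ν0)
        ≤ ∫⁻ _x, ENNReal.ofReal (Real.exp (t * (Ws + δ))) ∂ν0 := by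
          refine lintegral_mono fun x => ENNReal.ofReal_le_ofReal ?_
          refine keyU t ht1 x _ ?_
          have := abs_le.1 (ht x)
          linarith [hWle x]
      _ = ENNReal.ofReal (Real.exp (t * (Ws + δ))) := by
          rw [lintegral_const, measure_univ, mul_one]
  -- denominator lower bound
  have hZlb : ∀ δ : ℝ, 0 < δ → ∃ m : ℝ, 0 < m ∧ ∀ᶠ t : ℕ in atTop,
      ENNReal.ofReal (Real.exp (t * (Ws - δ)) * m) ≤ ∫⁻ x, ENNReal.ofReal (V t x) ∂ν0 := by
    intro δ hδ
    obtain ⟨x0, hx0⟩ : ∃ x', Ws - δ / 2 < W x' :=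
      exists_lt_of_lt_ciSup (by linarith : Ws - δ / 2 < Ws)
    set S : Set X := {x | Ws - δ / 2 < W x} with hS
    have hSopen : IsOpen S := isOpen_lt continuous_const hWc
    have hSne : S.Nonempty := ⟨x0, hx0⟩
    have hm0 : 0 < ν0 S := hsupp S hSopen hSne
    refine ⟨(ν0 S).toReal, ENNReal.toReal_pos hm0.ne' (measure_ne_top ν0 S), ?_⟩
    filter_upwards [hunif (δ / 2) (by linarith), eventually_ge_atTop 1] with t ht ht1
    have hpt : ∀ x ∈ S, ENNReal.ofReal (Real.exp (t * (Ws - δ))) ≤ ENNReal.ofReal (V t x) := by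
      intro x hx
      refine ENNReal.ofReal_le_ofReal (keyL t ht1 x _ ?_)
      have := abs_le.1 (ht x)
      have hx' : Ws - δ / 2 < W x := hx
      linarith
    calc ENNReal.ofReal (Real.exp (t * (Ws - δ)) * (ν0 S).toReal)
        = ENNReal.ofReal (Real.exp (t * (Ws - δ))) * ν0 S := by
          rw [ENNReal.ofReal_mul (Real.exp_nonneg _),
            ENNReal.ofReal_toReal (measure_ne_top ν0 S)]
      _ = ∫⁻ _x in S, ENNReal.ofReal (Real.exp (t * (Ws - δ))) ∂ν0 := by
          rw [setLIntegral_const]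
      _ ≤ ∫⁻ x in S, ENNReal.ofReal (V t x) ∂ν0 :=
          setLIntegral_mono' hSopen.measurableSet hpt
      _ ≤ ∫⁻ x, ENNReal.ofReal (V t x) ∂ν0 := setLIntegral_le_lintegral _ _
  constructor
  · -- upper bound, F closed
    intro F hF
    refine EReal.le_of_forall_lt_iff_le.1 fun z hz => ?_
    have hzF : ∀ x ∈ F, W x - Ws ≤ z := by
      intro x hx
      have h1 : (-z : EReal) < ((Ws - W x : ℝ) : EReal) :=
        lt_of_lt_of_le (EReal.neg_lt_of_neg_lt hz) (iInf₂_le x hx)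
      have h2 : ((-z : ℝ) : EReal) < ((Ws - W x : ℝ) : EReal) := by
        rwa [EReal.coe_neg]
      have := EReal.coe_lt_coe_iff.1 h2
      linarith
    refine EReal.le_of_forall_lt_iff_le.1 fun y hy => ?_
    have hzy : z < y := EReal.coe_lt_coe_iff.1 hy
    set δ : ℝ := (y - z) / 3 with hδdef
    have hδ : 0 < δ := by simp only [hδdef]; linarith
    obtain ⟨m, hm, hZl⟩ := hZlb δ hδ
    refine limsup_le_of_le (by isBoundedDefault) ?_
    filter_upwards [hunif δ hδ, hZl, eventually_ge_atTop 1,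
      eventually_ge_atTop (max 1 ⌈|Real.log m| / δ⌉₊)] with t ht hZt ht1 htm
    -- numerator upper bound
    have hNub : (∫⁻ x in F, ENNReal.ofReal (V t x) ∂ν0)
        ≤ ENNReal.ofReal (Real.exp (t * (Ws + z + δ))) := by
      calc (∫⁻ x in F, ENNReal.ofReal (V t x) ∂ν0)
          ≤ ∫⁻ _x in F, ENNReal.ofReal (Real.exp (t * (Ws + z + δ))) ∂ν0 := by
            refine setLIntegral_mono' hF.measurableSet fun x hx => ?_
            refine ENNReal.ofReal_le_ofReal (keyU t ht1 x _ ?_)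
            have := abs_le.1 (ht x)
            have := hzF x hx
            linarith
        _ = ENNReal.ofReal (Real.exp (t * (Ws + z + δ))) * ν0 F := setLIntegral_const _ _
        _ ≤ ENNReal.ofReal (Real.exp (t * (Ws + z + δ))) * 1 :=
            mul_le_mul_right prob_le_one _
        _ = _ := mul_one _
    have hexppos : (0:ℝ) < Real.exp (t * (Ws - δ)) * m := by positivity
    have hmeasle : wd ν0 (V t) F ≤
        ENNReal.ofReal ((Real.exp (t * (Ws - δ)) * m)⁻¹ * Real.exp (t * (Ws + z + δ))) := by
      rw [hwd t F hF.measurableSet, ENNReal.ofReal_mul (by positivity),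
        ENNReal.ofReal_inv_of_pos hexppos]
      exact mul_le_mul' (ENNReal.inv_le_inv' hZt) hNub
    -- now take logs
    have hlog : ENNReal.log (wd ν0 (V t) F) ≤
        ((t * (z + 2 * δ) - Real.log m : ℝ) : EReal) := by
      refine le_trans (ENNReal.log_monotone hmeasle) ?_
      rw [ENNReal.log_ofReal_of_pos (by positivity)]
      apply EReal.coe_le_coe_iff.2
      rw [Real.log_mul (by positivity) (by positivity), Real.log_inv,
        Real.log_mul (by positivity) (ne_of_gt hm), Real.log_exp, Real.log_exp]
      ring_nf
      exact le_refl _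
    have htpos : (0:ℝ) < ((t:ℝ))⁻¹ := by
      have : (0:ℝ) < (t:ℝ) := by exact_mod_cast ht1
      positivity
    refine le_trans (ereal_mul_le_coe htpos hlog) ?_
    apply EReal.coe_le_coe_iff.2
    have htR : (0:ℝ) < (t:ℝ) := by exact_mod_cast ht1
    have htm' : |Real.log m| / δ ≤ (t:ℝ) := by
      have h1 : (⌈|Real.log m| / δ⌉₊ : ℝ) ≤ t := by
        exact_mod_cast le_trans (le_max_right 1 _) htm
      exact le_trans (Nat.le_ceil _) h1
    have habs : -Real.log m ≤ δ * t := by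
      have := (div_le_iff₀ hδ).1 htm'
      have h2 : -Real.log m ≤ |Real.log m| := neg_le_abs _
      nlinarith
    rw [inv_mul_le_iff₀ htR]
    have hy' : y = z + 3 * δ := by simp only [hδdef]; ring
    rw [hy']
    nlinarith
  · -- lower bound, G open
    intro G hG
    rw [EReal.neg_le]
    refine le_iInf₂ fun x hx => ?_
    rw [EReal.neg_le, ← EReal.coe_neg, neg_sub]
    refine EReal.ge_of_forall_gt_iff_ge.1 fun z hz => ?_
    have hzlt : z < W x - Ws := EReal.coe_lt_coe_iff.1 hz
    set δ : ℝ := (W x - Ws - z) / 4 with hδdef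
    have hδ : 0 < δ := by simp only [hδdef]; linarith
    set B : Set X := G ∩ {y | W x - δ < W y} with hB
    have hBopen : IsOpen B := hG.inter (isOpen_lt continuous_const hWc)
    have hBx : x ∈ B := ⟨hx, by simp only [Set.mem_setOf_eq]; linarith⟩
    have hm0 : 0 < ν0 B := hsupp B hBopen ⟨x, hBx⟩
    set m : ℝ := (ν0 B).toReal with hm
    have hmpos : 0 < m := ENNReal.toReal_pos hm0.ne' (measure_ne_top ν0 B)
    refine le_liminf_of_le (by isBoundedDefault) ?_
    filter_upwards [hunif δ hδ, hZub δ hδ, eventually_ge_atTop 1,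
      eventually_ge_atTop (max 1 ⌈|Real.log m| / δ⌉₊)] with t ht hZt ht1 htm
    have hNlb : ENNReal.ofReal (Real.exp (t * (W x - 2*δ)) * m)
        ≤ ∫⁻ y in G, ENNReal.ofReal (V t y) ∂ν0 := by
      calc ENNReal.ofReal (Real.exp (t * (W x - 2*δ)) * m)
          = ENNReal.ofReal (Real.exp (t * (W x - 2*δ))) * ν0 B := by
            rw [ENNReal.ofReal_mul (Real.exp_nonneg _), hm,
              ENNReal.ofReal_toReal (measure_ne_top ν0 B)]
        _ = ∫⁻ _y in B, ENNReal.ofReal (Real.exp (t * (W x - 2*δ))) ∂ν0 :=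
            (setLIntegral_const _ _).symm
        _ ≤ ∫⁻ y in B, ENNReal.ofReal (V t y) ∂ν0 := by
            refine setLIntegral_mono' hBopen.measurableSet fun y hy => ?_
            refine ENNReal.ofReal_le_ofReal (keyL t ht1 y _ ?_)
            have h1 := abs_le.1 (ht y)
            have h2 : W x - δ < W y := hy.2
            linarith
        _ ≤ ∫⁻ y in G, ENNReal.ofReal (V t y) ∂ν0 :=
            lintegral_mono_set Set.inter_subset_left
    have hexppos : (0:ℝ) < Real.exp (t * (Ws + δ)) := Real.exp_pos _
    have hmeasge : ENNReal.ofReal ((Real.exp (t * (Ws + δ)))⁻¹ *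
        (Real.exp (t * (W x - 2*δ)) * m)) ≤ wd ν0 (V t) G := by
      rw [hwd t G hG.measurableSet, ENNReal.ofReal_mul (by positivity),
        ENNReal.ofReal_inv_of_pos hexppos]
      exact mul_le_mul' (ENNReal.inv_le_inv' hZt) hNlb
    have hlog : ((t * (z + δ) + Real.log m : ℝ) : EReal) ≤ ENNReal.log (wd ν0 (V t) G) := by
      refine le_trans ?_ (ENNReal.log_monotone hmeasge)
      rw [ENNReal.log_ofReal_of_pos (by positivity)]
      apply EReal.coe_le_coe_iff.2
      rw [Real.log_mul (by positivity) (by positivity), Real.log_inv,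
        Real.log_mul (by positivity) (ne_of_gt hmpos), Real.log_exp, Real.log_exp]
      have hzδ : z + δ = W x - Ws - 3*δ := by simp only [hδdef]; ring
      nlinarith [ht1]
    have htR : (0:ℝ) < (t:ℝ) := by exact_mod_cast ht1
    have htpos : (0:ℝ) < ((t:ℝ))⁻¹ := by positivity
    refine le_trans ?_ (ereal_coe_le_mul htpos hlog)
    apply EReal.coe_le_coe_iff.2
    have htm' : |Real.log m| / δ ≤ (t:ℝ) := by
      have h1 : (⌈|Real.log m| / δ⌉₊ : ℝ) ≤ t := by
        exact_mod_cast le_trans (le_max_right 1 _) htm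
      exact le_trans (Nat.le_ceil _) h1
    have habs : -Real.log m ≤ δ * t := by
      have := (div_le_iff₀ hδ).1 htm'
      have h2 : -Real.log m ≤ |Real.log m| := neg_le_abs _
      nlinarith
    calc z = (t:ℝ)⁻¹ * ((t:ℝ) * z) := by field_simp
      _ ≤ (t:ℝ)⁻¹ * ((t:ℝ) * (z + δ) + Real.log m) := by
          refine mul_le_mul_of_nonneg_left ?_ (le_of_lt htpos)
          nlinarith


/-- Theorem 1.2 / Theorem main1: LDP for totally bounded families of
portfolio maps. -/
theorem stmt0 {n : ℕ} (hn : 2 ≤ n) (M : ℝ) (hM : 0 < M)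
    (μ : ℕ → ↥(oS n)) (hAM : AssumptionM M μ)
    (Θ : Set (PMap n)) (hTB : TotallyBounded Θ)
    (hmeas : Measurable fun pc : ↥(oS n) × ↥Θ => UniformFun.toFun pc.2.1 pc.1)
    (W : ↥Θ → ℝ)
    (hW : ∀ θ : ↥Θ, Tendsto (fun t : ℕ => Real.log (pV μ (UniformFun.toFun θ.1) t) / t)
      atTop (𝓝 (W θ)))
    (ν0 : Measure ↥Θ) [IsProbabilityMeasure ν0]
    (hsupp : ∀ U : Set ↥Θ, IsOpen U → U.Nonempty → 0 < ν0 U) :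
    (∀ F : Set ↥Θ, IsClosed F →
      limsup (fun t : ℕ =>
          (((t : ℝ)⁻¹ : ℝ) : EReal) *
            ENNReal.log (wd ν0 (fun θ : ↥Θ => pV μ (UniformFun.toFun θ.1) t) F)) atTop
        ≤ -(⨅ θ ∈ F, (((⨆ θ' : ↥Θ, W θ') - W θ : ℝ) : EReal))) ∧
    (∀ G : Set ↥Θ, IsOpen G →
      -(⨅ θ ∈ G, (((⨆ θ' : ↥Θ, W θ') - W θ : ℝ) : EReal)) ≤
        liminf (fun t : ℕ =>
          (((t : ℝ)⁻¹ : ℝ) : EReal) *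
            ENNReal.log (wd ν0 (fun θ : ↥Θ => pV μ (UniformFun.toFun θ.1) t) G)) atTop) := by
  classical
  have hn0 : 0 < n := by omega
  have i0 : Fin n := ⟨0, by omega⟩
  have hM1 : (1:ℝ) ≤ M := by
    have h := hAM 0 i0
    have h1 : 1 / M ≤ M := le_trans h.1 h.2
    have h2 := (div_le_iff₀ hM).1 h1
    nlinarith
  set K : ℝ := (n : ℝ) * M ^ 2 with hK
  have hnR : (0:ℝ) < (n:ℝ) := by exact_mod_cast hn0
  have hKpos : 0 < K := by rw [hK]; positivity
  set V : ℕ → ↥Θ → ℝ := fun t θ => pV μ (UniformFun.toFun θ.1) t with hV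
  have hVpos : ∀ (t : ℕ) (θ : ↥Θ), 0 < V t θ := fun t θ => LDPAux.pV_pos hM hAM _ t
  -- from uniform distance to coordinatewise bounds
  have hcoord : ∀ (f g : PMap n) (ε : ℝ),
      (∀ p, dist (UniformFun.toFun f p) (UniformFun.toFun g p) ≤ ε) →
      ∀ (p : ↥(oS n)) (i : Fin n),
        |(UniformFun.toFun f p).1 i - (UniformFun.toFun g p).1 i| ≤ ε := by
    intro f g ε h p i
    rw [← Real.dist_eq]
    refine le_trans (dist_le_pi_dist
      (UniformFun.toFun f p).1 (UniformFun.toFun g p).1 i) ?_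
    rw [← Subtype.dist_eq]
    exact h p
  have hlogdiff : ∀ (ε : ℝ), 0 ≤ ε → ∀ θ θ' : ↥Θ,
      (∀ p, dist (UniformFun.toFun θ.1 p) (UniformFun.toFun θ'.1 p) ≤ ε) →
      ∀ t : ℕ, |Real.log (V t θ) - Real.log (V t θ')| ≤ t * (K * ε) := by
    intro ε hε θ θ' h t
    have h1 := LDPAux.log_pV_lip (μ := μ) hM hAM hε (hcoord θ.1 θ'.1 ε h) t
    have h2 := LDPAux.log_pV_lip (μ := μ) hM hAM hε
      (hcoord θ'.1 θ.1 ε (fun p => by rw [dist_comm]; exact h p)) t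
    rw [abs_le]
    have hKe : (t:ℝ) * ((n:ℝ) * M ^ 2 * ε) = t * (K * ε) := by rw [hK]
    constructor
    · nlinarith [h1, h2, hKe]
    · nlinarith [h1, h2, hKe]
  have hΛdiff : ∀ (ε : ℝ), 0 ≤ ε → ∀ θ θ' : ↥Θ,
      (∀ p, dist (UniformFun.toFun θ.1 p) (UniformFun.toFun θ'.1 p) ≤ ε) →
      ∀ t : ℕ, 1 ≤ t →
      |Real.log (V t θ) / t - Real.log (V t θ') / t| ≤ K * ε := by
    intro ε hε θ θ' h t ht
    have htR : (0:ℝ) < t := by exact_mod_cast ht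
    rw [div_sub_div_same, abs_div, abs_of_pos htR, div_le_iff₀ htR]
    calc |Real.log (V t θ) - Real.log (V t θ')| ≤ t * (K * ε) := hlogdiff ε hε θ θ' h t
      _ = K * ε * t := by ring
  have hWdiff : ∀ (ε : ℝ), 0 ≤ ε → ∀ θ θ' : ↥Θ,
      (∀ p, dist (UniformFun.toFun θ.1 p) (UniformFun.toFun θ'.1 p) ≤ ε) →
      |W θ - W θ'| ≤ K * ε := by
    intro ε hε θ θ' h
    have hTT : Tendsto (fun t : ℕ => |Real.log (V t θ) / t - Real.log (V t θ') / t|)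
        atTop (𝓝 |W θ - W θ'|) := ((hW θ).sub (hW θ')).abs
    refine le_of_tendsto hTT ?_
    filter_upwards [eventually_ge_atTop 1] with t ht
    exact hΛdiff ε hε θ θ' h t ht
  have hWub : ∀ θ : ↥Θ, W θ ≤ Real.log M := by
    intro θ
    refine le_of_tendsto (hW θ) ?_
    filter_upwards [eventually_ge_atTop 1] with t ht
    have htR : (0:ℝ) < t := by exact_mod_cast ht
    rw [div_le_iff₀ htR]
    calc Real.log (V t θ) ≤ Real.log (M ^ t) :=
        Real.log_le_log (hVpos t θ) (LDPAux.pV_bounds hM hAM _ t).2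
      _ = t * Real.log M := by rw [Real.log_pow]
      _ = Real.log M * t := mul_comm _ _
  have hWbdd : BddAbove (Set.range W) := ⟨Real.log M, by rintro _ ⟨θ, rfl⟩; exact hWub θ⟩
  have hVmem : ∀ ε : ℝ, 0 < ε →
      {q : ↥(cS n) × ↥(cS n) | dist q.1 q.2 ≤ ε} ∈ 𝓤 ↥(cS n) := by
    intro ε hε
    rw [Metric.mem_uniformity_dist]
    exact ⟨ε, hε, fun {a b} h => le_of_lt h⟩
  have hball : ∀ (θ0 : ↥Θ) (ε : ℝ), 0 < ε →
      {θ : ↥Θ | ∀ p, dist (UniformFun.toFun θ0.1 p) (UniformFun.toFun θ.1 p) ≤ ε} ∈ 𝓝 θ0 := by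
    intro θ0 ε hε
    have hb : UniformSpace.ball (θ0.1 : PMap n)
        (UniformFun.gen (↥(oS n)) (↥(cS n)) {q : ↥(cS n) × ↥(cS n) | dist q.1 q.2 ≤ ε})
        ∈ 𝓝 (θ0.1 : PMap n) :=
      (nhds_basis_uniformity' (UniformFun.hasBasis_uniformity (↥(oS n)) (↥(cS n)))).mem_of_mem
        (hVmem ε hε)
    have h2 := preimage_mem_comap (m := (Subtype.val : ↥Θ → PMap n)) hb
    rw [← nhds_subtype_eq_comap] at h2
    refine Filter.mem_of_superset h2 ?_
    intro θ hθ p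
    exact hθ p
    exact θ0.2
  have hWc : Continuous W := by
    rw [continuous_iff_continuousAt]
    intro θ0
    rw [ContinuousAt, Metric.tendsto_nhds]
    intro ε hε
    set ε' : ℝ := ε / (K + 1) with hε'
    have hε'pos : 0 < ε' := by rw [hε']; positivity
    filter_upwards [hball θ0 ε' hε'pos] with θ hθ
    rw [Real.dist_eq]
    have h1 : ∀ p, dist (UniformFun.toFun θ.1 p) (UniformFun.toFun θ0.1 p) ≤ ε' := by
      intro p; rw [dist_comm]; exact hθ p
    refine lt_of_le_of_lt (hWdiff ε' hε'pos.le θ θ0 h1) ?_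
    rw [hε', mul_comm, div_mul_eq_mul_div, div_lt_iff₀ (by linarith : (0:ℝ) < K + 1)]
    nlinarith
  have hunif : ∀ δ : ℝ, 0 < δ →
      ∀ᶠ t : ℕ in atTop, ∀ θ : ↥Θ, |Real.log (V t θ) / t - W θ| ≤ δ := by
    intro δ hδ
    set ε : ℝ := δ / (3 * (K + 1)) with hε
    have hεpos : 0 < ε := by rw [hε]; positivity
    have hKε : K * ε ≤ δ / 3 := by
      rw [hε, mul_comm, div_mul_eq_mul_div,
        div_le_div_iff₀ (by positivity) (by norm_num : (0:ℝ) < 3)]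
      nlinarith
    have hd : UniformFun.gen (↥(oS n)) (↥(cS n)) {q : ↥(cS n) × ↥(cS n) | dist q.1 q.2 ≤ ε}
        ∈ 𝓤 (PMap n) :=
      (UniformFun.hasBasis_uniformity (↥(oS n)) (↥(cS n))).mem_of_mem (hVmem ε hεpos)
    obtain ⟨s, hsΘ, hsfin, hcov⟩ := totallyBounded_iff_subset.1 hTB _ hd
    have hconv : ∀ᶠ t : ℕ in atTop, ∀ y ∈ s, ∀ (hy : y ∈ Θ),
        |Real.log (V t ⟨y, hy⟩) / t - W ⟨y, hy⟩| ≤ δ / 3 := by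
      rw [eventually_all_finite hsfin]
      intro y hys
      rw [Filter.eventually_all]
      intro hy
      have h3 : ∀ᶠ t : ℕ in atTop,
          dist (Real.log (V t ⟨y, hy⟩) / t) (W ⟨y, hy⟩) < δ / 3 :=
        Metric.tendsto_nhds.1 (hW ⟨y, hy⟩) _ (by linarith)
      filter_upwards [h3] with t h4
      rw [Real.dist_eq] at h4
      exact h4.le
    filter_upwards [hconv, eventually_ge_atTop 1] with t hct ht1
    intro θ
    obtain ⟨y, hys, hθy⟩ : ∃ y ∈ s, (θ.1, y) ∈
        UniformFun.gen (↥(oS n)) (↥(cS n)) {q : ↥(cS n) × ↥(cS n) | dist q.1 q.2 ≤ ε} := by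
      have h5 := hcov θ.2
      rw [Set.mem_iUnion₂] at h5
      obtain ⟨y, hy1, hy2⟩ := h5
      exact ⟨y, hy1, hy2⟩
    have hy : y ∈ Θ := hsΘ hys
    have hd1 : ∀ p, dist (UniformFun.toFun θ.1 p)
        (UniformFun.toFun ((⟨y, hy⟩ : ↥Θ)).1 p) ≤ ε := fun p => hθy p
    have h1 := hΛdiff ε hεpos.le θ ⟨y, hy⟩ hd1 t ht1
    have h2 := hWdiff ε hεpos.le θ ⟨y, hy⟩ hd1
    have h3 := hct y hys hy
    have a1 := abs_le.1 h1
    have a2 := abs_le.1 h2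
    have a3 := abs_le.1 h3
    rw [abs_le]
    constructor <;> nlinarith [hKε]
  exact abstract_ldp ν0 hsupp V hVpos W hWc hWbdd hunif
end
end

section
/- Let {π_θ}_{θ∈Θ} be a jointly measurable family of portfolio maps indexed by a topological space Θ, let {μ(t)} ⊂ Δ_n satisfy Assumption (M), let ν_0 be a Borel probability measure on Θ and let {ν_t} be the wealth distributions. Define Cover's portfolio π̂(t) = ∫_Θ π_θ(μ(t)) dν_t(θ) ∈ Δ̄_n. Then the relative value V_{π̂}(t) of the strategy {π̂(t)} equals V̂(t) = ∫_Θ V_θ(t) dν_0(θ) for all t ≥ 0. -/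
open MeasureTheory Filter Topology Finset
open scoped ENNReal

noncomputable section

open scoped NNReal

/-- Integration against the normalized wealth distribution. -/
lemma wd_int {T : Type*} [MeasurableSpace T] {E : Type*} [NormedAddCommGroup E]
    [NormedSpace ℝ E] [CompleteSpace E]
    (ν0 : Measure T) (V : T → ℝ) (hVm : Measurable V) (hV0 : ∀ x, 0 ≤ V x)
    (hVint : Integrable V ν0) (hW : 0 < ∫ x, V x ∂ν0)
    (g : T → E) (hgi : Integrable (fun x => V x • g x) ν0) :
    Integrable g (wd ν0 V) ∧
      ∫ x, g x ∂(wd ν0 V) = (∫ x, V x ∂ν0)⁻¹ • ∫ x, V x • g x ∂ν0 := by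
  set W := ∫ x, V x ∂ν0 with hWdef
  have hVm' : Measurable fun x => (V x).toNNReal := hVm.real_toNNReal
  have hsm : ∀ x, ((V x).toNNReal : ℝ≥0) • g x = V x • g x := by
    intro x
    rw [NNReal.smul_def, Real.coe_toNNReal _ (hV0 x)]
  have hc : (ν0.withDensity fun x => ENNReal.ofReal (V x)) Set.univ = ENNReal.ofReal W := by
    rw [withDensity_apply _ MeasurableSet.univ, Measure.restrict_univ,
      ← ofReal_integral_eq_lintegral_ofReal hVint (ae_of_all _ hV0)]
  have hc0 : ENNReal.ofReal W ≠ 0 := (ENNReal.ofReal_pos.2 hW).ne'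
  have hwd : wd ν0 V = (ENNReal.ofReal W)⁻¹ •
      ν0.withDensity fun x => ((V x).toNNReal : ℝ≥0∞) := by
    rw [wd, hc]; rfl
  have hint : Integrable g (ν0.withDensity fun x => ((V x).toNNReal : ℝ≥0∞)) := by
    rw [integrable_withDensity_iff_integrable_smul hVm']
    exact hgi.congr (ae_of_all _ fun x => (hsm x).symm)
  constructor
  · rw [hwd]
    exact hint.smul_measure (ENNReal.inv_ne_top.2 hc0)
  · rw [hwd, integral_smul_measure, integral_withDensity_eq_integral_smul hVm' g,
      integral_congr_ae (ae_of_all _ hsm), ENNReal.toReal_inv, ENNReal.toReal_ofReal hW.le]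

/-- Lemma 2.4, Cover's portfolio: the relative value of the wealth-weighted
average strategy `π̂(t) = ∫_Θ π_θ(μ(t)) dν_t(θ)` equals `V̂(t) = ∫_Θ V_θ(t) dν₀(θ)`, and
`π̂(t) ∈ Δ̄ₙ`. -/
theorem stmt4 {n : ℕ} (hn : 2 ≤ n) (M : ℝ) (hM : 0 < M)
    {Θ : Type*} [TopologicalSpace Θ] [MeasurableSpace Θ] [BorelSpace Θ]
    (π : Θ → ↥(oS n) → ↥(cS n))
    (hmeas : Measurable fun pc : ↥(oS n) × Θ => π pc.2 pc.1)
    (μ : ℕ → ↥(oS n)) (hAM : AssumptionM M μ)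
    (ν0 : Measure Θ) [IsProbabilityMeasure ν0] :
    ∀ t : ℕ,
      (∫ θ : Θ, (π θ (μ t) : Fin n → ℝ) ∂(wd ν0 fun θ => pV μ (π θ) t)) ∈ cS n ∧
      relV (fun s => (μ s : Fin n → ℝ))
          (fun s => ∫ θ : Θ, (π θ (μ s) : Fin n → ℝ) ∂(wd ν0 fun θ => pV μ (π θ) s)) t =
        ∫ θ : Θ, pV μ (π θ) t ∂ν0 := by
  classical
  have hM' : (0:ℝ) < 1 / M := by positivity
  have hπ0 : ∀ θ (p : ↥(oS n)) i, (0:ℝ) ≤ (π θ p : Fin n → ℝ) i := fun θ p i => (π θ p).2.1 i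
  have hπ1 : ∀ θ (p : ↥(oS n)), ∑ i, (π θ p : Fin n → ℝ) i = 1 := fun θ p => (π θ p).2.2
  have hπle1 : ∀ θ (p : ↥(oS n)) i, (π θ p : Fin n → ℝ) i ≤ 1 := by
    intro θ p i
    calc (π θ p : Fin n → ℝ) i ≤ ∑ j, (π θ p : Fin n → ℝ) j :=
          Finset.single_le_sum (fun j _ => hπ0 θ p j) (Finset.mem_univ i)
      _ = 1 := hπ1 θ p
  have hVstep : ∀ (p : ↥(oS n) → ↥(cS n)) t, pV μ p (t + 1) =
      pV μ p t * ∑ i, (p (μ t) : Fin n → ℝ) i *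
        ((μ (t + 1) : Fin n → ℝ) i / (μ t : Fin n → ℝ) i) := fun p t => rfl
  have hV0 : ∀ (p : ↥(oS n) → ↥(cS n)), pV μ p 0 = 1 := fun p => rfl
  have hfac_lb : ∀ θ t, 1 / M ≤ ∑ i, (π θ (μ t) : Fin n → ℝ) i *
      ((μ (t + 1) : Fin n → ℝ) i / (μ t : Fin n → ℝ) i) := by
    intro θ t
    calc 1 / M = ∑ i, (π θ (μ t) : Fin n → ℝ) i * (1 / M) := by
          rw [← Finset.sum_mul, hπ1, one_mul]
      _ ≤ _ := Finset.sum_le_sum fun i _ =>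
          mul_le_mul_of_nonneg_left (hAM t i).1 (hπ0 θ (μ t) i)
  have hfac_ub : ∀ θ t, ∑ i, (π θ (μ t) : Fin n → ℝ) i *
      ((μ (t + 1) : Fin n → ℝ) i / (μ t : Fin n → ℝ) i) ≤ M := by
    intro θ t
    calc ∑ i, (π θ (μ t) : Fin n → ℝ) i *
          ((μ (t + 1) : Fin n → ℝ) i / (μ t : Fin n → ℝ) i)
        ≤ ∑ i, (π θ (μ t) : Fin n → ℝ) i * M :=
          Finset.sum_le_sum fun i _ =>
            mul_le_mul_of_nonneg_left (hAM t i).2 (hπ0 θ (μ t) i)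
      _ = M := by rw [← Finset.sum_mul, hπ1, one_mul]
  have hfac_pos : ∀ θ t, 0 < ∑ i, (π θ (μ t) : Fin n → ℝ) i *
      ((μ (t + 1) : Fin n → ℝ) i / (μ t : Fin n → ℝ) i) :=
    fun θ t => lt_of_lt_of_le hM' (hfac_lb θ t)
  have hVpos : ∀ t θ, 0 < pV μ (π θ) t := by
    intro t
    induction t with
    | zero => intro θ; rw [hV0]; norm_num
    | succ t ih =>
      intro θ
      rw [hVstep]
      exact mul_pos (ih θ) (hfac_pos θ t)
  have hVub : ∀ t θ, pV μ (π θ) t ≤ M ^ t := by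
    intro t
    induction t with
    | zero => intro θ; rw [hV0]; norm_num
    | succ t ih =>
      intro θ
      rw [hVstep, pow_succ]
      exact mul_le_mul (ih θ) (hfac_ub θ t) (hfac_pos θ t).le (by positivity)
  have hVlb : ∀ t θ, (1 / M) ^ t ≤ pV μ (π θ) t := by
    intro t
    induction t with
    | zero => intro θ; rw [hV0]; norm_num
    | succ t ih =>
      intro θ
      rw [hVstep, pow_succ]
      exact mul_le_mul (ih θ) (hfac_lb θ t) hM'.le (hVpos t θ).le
  -- measurability
  have hmπ : ∀ (p : ↥(oS n)) i, Measurable fun θ : Θ => (π θ p : Fin n → ℝ) i := by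
    intro p i
    have h1 : Measurable fun θ : Θ => π θ p :=
      hmeas.comp (measurable_const.prodMk measurable_id)
    exact (measurable_pi_apply i).comp (measurable_subtype_coe.comp h1)
  have hmV : ∀ t, Measurable fun θ : Θ => pV μ (π θ) t := by
    intro t
    induction t with
    | zero =>
      have : (fun θ : Θ => pV μ (π θ) 0) = fun _ => (1:ℝ) := funext fun θ => hV0 (π θ)
      rw [this]; exact measurable_const
    | succ t ih =>
      have : (fun θ : Θ => pV μ (π θ) (t+1)) = fun θ =>
          pV μ (π θ) t * ∑ i, (π θ (μ t) : Fin n → ℝ) i *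
            ((μ (t + 1) : Fin n → ℝ) i / (μ t : Fin n → ℝ) i) :=
        funext fun θ => hVstep (π θ) t
      rw [this]
      exact ih.mul (Finset.measurable_sum _ fun i _ => (hmπ (μ t) i).mul measurable_const)
  have hVint : ∀ t, Integrable (fun θ => pV μ (π θ) t) ν0 := by
    intro t
    refine (integrable_const (M ^ t)).mono' (hmV t).aestronglyMeasurable
      (ae_of_all _ fun θ => ?_)
    rw [Real.norm_eq_abs, abs_of_pos (hVpos t θ)]
    exact hVub t θ
  have hWpos : ∀ t, 0 < ∫ θ, pV μ (π θ) t ∂ν0 := by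
    intro t
    have h1 : (1 / M) ^ t ≤ ∫ θ, pV μ (π θ) t ∂ν0 := by
      calc (1 / M) ^ t = ∫ _ : Θ, (1 / M) ^ t ∂ν0 := by simp
        _ ≤ _ := integral_mono (integrable_const _) (hVint t) fun θ => hVlb t θ
    exact lt_of_lt_of_le (by positivity) h1
  -- integrability of V t • (vector π) and components
  have hVπint : ∀ t i, Integrable (fun θ => pV μ (π θ) t * (π θ (μ t) : Fin n → ℝ) i) ν0 := by
    intro t i
    have := Integrable.bdd_mul (μ := ν0) (f := fun θ => (π θ (μ t) : Fin n → ℝ) i)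
      (hVint t) (hmπ (μ t) i).aestronglyMeasurable
      (c := 1) (ae_of_all _ fun θ => by
        rw [Real.norm_eq_abs, abs_of_nonneg (hπ0 θ (μ t) i)]; exact hπle1 θ (μ t) i)
    exact this.congr (ae_of_all _ fun θ => mul_comm _ _)
  have hvecint : ∀ t, Integrable
      (fun θ => pV μ (π θ) t • (π θ (μ t) : Fin n → ℝ)) ν0 := by
    intro t
    have hmeas' : AEStronglyMeasurable
        (fun θ => pV μ (π θ) t • (π θ (μ t) : Fin n → ℝ)) ν0 := by
      apply Measurable.aestronglyMeasurable
      apply measurable_pi_lambda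
      intro i
      exact (hmV t).mul (hmπ (μ t) i)
    refine (integrable_const (M ^ t)).mono' hmeas' (ae_of_all _ fun θ => ?_)
    rw [norm_smul, Real.norm_eq_abs, abs_of_pos (hVpos t θ)]
    calc pV μ (π θ) t * ‖(π θ (μ t) : Fin n → ℝ)‖ ≤ M ^ t * 1 := by
          apply mul_le_mul (hVub t θ) _ (norm_nonneg _) (by positivity)
          apply pi_norm_le_iff_of_nonneg zero_le_one |>.2
          intro i
          rw [Real.norm_eq_abs, abs_of_nonneg (hπ0 θ (μ t) i)]
          exact hπle1 θ (μ t) i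
      _ = M ^ t := mul_one _
  -- the key identity for components of Cover's portfolio
  have hkey : ∀ t i, (∫ θ : Θ, (π θ (μ t) : Fin n → ℝ)
        ∂(wd ν0 fun θ => pV μ (π θ) t)) i
      = (∫ θ, pV μ (π θ) t ∂ν0)⁻¹ *
        ∫ θ, pV μ (π θ) t * (π θ (μ t) : Fin n → ℝ) i ∂ν0 := by
    intro t i
    obtain ⟨hint, heq⟩ := wd_int ν0 (fun θ => pV μ (π θ) t) (hmV t)
      (fun θ => (hVpos t θ).le) (hVint t) (hWpos t)
      (fun θ => (π θ (μ t) : Fin n → ℝ)) (hvecint t)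
    rw [heq, Pi.smul_apply, smul_eq_mul]
    congr 1
    have h2 := (ContinuousLinearMap.proj (R := ℝ) (φ := fun _ : Fin n => ℝ)
      i).integral_comp_comm (hvecint t)
    simpa [ContinuousLinearMap.proj_apply] using h2.symm
  -- membership in the closed simplex
  have hmem : ∀ t, (∫ θ : Θ, (π θ (μ t) : Fin n → ℝ)
      ∂(wd ν0 fun θ => pV μ (π θ) t)) ∈ cS n := by
    intro t
    constructor
    · intro i
      rw [hkey t i]
      exact mul_nonneg (inv_nonneg.2 (hWpos t).le)
        (integral_nonneg fun θ => mul_nonneg (hVpos t θ).le (hπ0 θ (μ t) i))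
    · rw [Finset.sum_congr rfl fun i _ => hkey t i, ← Finset.mul_sum,
        ← integral_finset_sum _ fun i _ => hVπint t i]
      have hsum : ∀ θ : Θ, ∑ i, pV μ (π θ) t * (π θ (μ t) : Fin n → ℝ) i
          = pV μ (π θ) t := by
        intro θ
        rw [← Finset.mul_sum, hπ1, mul_one]
      rw [integral_congr_ae (ae_of_all _ hsum), inv_mul_cancel₀ (hWpos t).ne']
  -- main statement
  intro t
  refine ⟨hmem t, ?_⟩
  induction t with
  | zero =>
    have : (fun θ : Θ => pV μ (π θ) 0) = fun _ => (1:ℝ) := funext fun θ => hV0 (π θ)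
    simp [relV, this]
  | succ t ih =>
    rw [show relV (fun s => (μ s : Fin n → ℝ))
        (fun s => ∫ θ : Θ, (π θ (μ s) : Fin n → ℝ) ∂(wd ν0 fun θ => pV μ (π θ) s)) (t+1)
      = relV (fun s => (μ s : Fin n → ℝ))
          (fun s => ∫ θ : Θ, (π θ (μ s) : Fin n → ℝ) ∂(wd ν0 fun θ => pV μ (π θ) s)) t *
        ∑ i, (∫ θ : Θ, (π θ (μ t) : Fin n → ℝ) ∂(wd ν0 fun θ => pV μ (π θ) t)) i *
          ((μ (t + 1) : Fin n → ℝ) i / (μ t : Fin n → ℝ) i) from rfl, ih]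
    have hstep : ∑ i, (∫ θ : Θ, (π θ (μ t) : Fin n → ℝ)
          ∂(wd ν0 fun θ => pV μ (π θ) t)) i *
          ((μ (t + 1) : Fin n → ℝ) i / (μ t : Fin n → ℝ) i)
        = (∫ θ, pV μ (π θ) t ∂ν0)⁻¹ * ∫ θ, pV μ (π θ) (t+1) ∂ν0 := by
      have h1 : ∀ i, (∫ θ : Θ, (π θ (μ t) : Fin n → ℝ)
            ∂(wd ν0 fun θ => pV μ (π θ) t)) i *
            ((μ (t + 1) : Fin n → ℝ) i / (μ t : Fin n → ℝ) i)
          = (∫ θ, pV μ (π θ) t ∂ν0)⁻¹ *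
            ∫ θ, pV μ (π θ) t * (π θ (μ t) : Fin n → ℝ) i *
              ((μ (t + 1) : Fin n → ℝ) i / (μ t : Fin n → ℝ) i) ∂ν0 := by
        intro i
        rw [hkey t i, integral_mul_const, mul_assoc]
      rw [Finset.sum_congr rfl fun i _ => h1 i, ← Finset.mul_sum,
        ← integral_finset_sum _ fun i _ => (hVπint t i).mul_const _]
      congr 1
      apply integral_congr_ae (ae_of_all _ fun θ => ?_)
      rw [hVstep (π θ) t, Finset.mul_sum]
      exact Finset.sum_congr rfl fun i _ => mul_assoc _ _ _
    rw [hstep, ← mul_assoc, mul_inv_cancel₀ (hWpos t).ne', one_mul]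
end
end

section
/- Suppose the market weight sequence {μ(t)} takes values in a finite set E ⊂ Δ_n and the empirical measures ℙ_t converge weakly to a probability measure ℙ on E × E. Let Θ = (Δ̄_n)^E be the set of all portfolio maps on E, with the topology of uniform (equivalently pointwise) convergence. Then: (a) for every π ∈ Θ the asymptotic growth rate W(π) = lim_{t→∞} (1/t) log V_π(t) exists and equals ∫_{E×E} ℓ_π dℙ; (b) there exists π* ∈ Θ with W(π*) = max_{π∈Θ} W(π); and (c) writing ℙ(p,q) = ℙ_1(p) ℙ_2(q | p) with ℙ_1 the first marginal, any such maximizer satisfies π*(p) ∈ argmax_{x ∈ Δ̄_n} ∫_E log( Σ_i x_i q_i/p_i ) ℙ_2(dq | p) for every p ∈ E with ℙ_1(p) > 0. -/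
open scoped Classical

open MeasureTheory Filter Topology Finset
open scoped ENNReal

noncomputable section

/-- Relative value of a portfolio map defined on a finite state space `E`. -/
def pVE {n : ℕ} {E : Finset (Fin n → ℝ)} (μ : ℕ → ↥(oS n))
    (hr : ∀ t, (μ t : Fin n → ℝ) ∈ E) (π : ↥E → ↥(cS n)) : ℕ → ℝ :=
  relV (fun t => (μ t : Fin n → ℝ))
    (fun t => (π ⟨(μ t : Fin n → ℝ), hr t⟩ : Fin n → ℝ))

/-- `ℓ_π(p,q) = log( Σ_i π_i(p) q_i/p_i )` for a portfolio map on `E`. -/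
def lE {n : ℕ} {E : Finset (Fin n → ℝ)} (π : ↥E → ↥(cS n)) (p q : ↥E) : ℝ :=
  Real.log (∑ i, (π p : Fin n → ℝ) i * ((q : Fin n → ℝ) i / (p : Fin n → ℝ) i))

/-- Positivity of weighted relative returns. -/
lemma sum_ratio_pos {n : ℕ} {x p q : Fin n → ℝ} (hx : x ∈ cS n)
    (hp : p ∈ oS n) (hq : q ∈ oS n) :
    0 < ∑ i, x i * (q i / p i) := by
  obtain ⟨hx0, hx1⟩ := hx
  have hex : ∃ i, 0 < x i := by
    by_contra h
    push_neg at h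
    have : (∑ i, x i) ≤ 0 := Finset.sum_nonpos (fun i _ => h i)
    linarith
  obtain ⟨i, hi⟩ := hex
  exact Finset.sum_pos'
    (fun j _ => mul_nonneg (hx0 j) (le_of_lt (div_pos (hq.1 j) (hp.1 j))))
    ⟨i, Finset.mem_univ i, mul_pos hi (div_pos (hq.1 i) (hp.1 i))⟩

lemma pVE_pos {n : ℕ} {E : Finset (Fin n → ℝ)} (μ : ℕ → ↥(oS n))
    (hr : ∀ t, (μ t : Fin n → ℝ) ∈ E) (π : ↥E → ↥(cS n)) (t : ℕ) :
    0 < pVE μ hr π t := by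
  induction t with
  | zero => exact one_pos
  | succ t ih =>
    have hS : 0 < ∑ i, (π ⟨(μ t : Fin n → ℝ), hr t⟩ : Fin n → ℝ) i *
        ((μ (t+1) : Fin n → ℝ) i / (μ t : Fin n → ℝ) i) :=
      sum_ratio_pos (π ⟨(μ t : Fin n → ℝ), hr t⟩).2 (μ t).2 (μ (t+1)).2
    exact mul_pos ih hS

lemma log_pVE {n : ℕ} {E : Finset (Fin n → ℝ)} (μ : ℕ → ↥(oS n))
    (hr : ∀ t, (μ t : Fin n → ℝ) ∈ E) (π : ↥E → ↥(cS n)) (t : ℕ) :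
    Real.log (pVE μ hr π t) =
      ∑ s ∈ Finset.range t,
        lE π ⟨(μ s : Fin n → ℝ), hr s⟩ ⟨(μ (s+1) : Fin n → ℝ), hr (s+1)⟩ := by
  induction t with
  | zero => simp [pVE, relV]
  | succ t ih =>
    have hS : 0 < ∑ i, (π ⟨(μ t : Fin n → ℝ), hr t⟩ : Fin n → ℝ) i *
        ((μ (t+1) : Fin n → ℝ) i / (μ t : Fin n → ℝ) i) :=
      sum_ratio_pos (π ⟨(μ t : Fin n → ℝ), hr t⟩).2 (μ t).2 (μ (t+1)).2
    have hstep : pVE μ hr π (t+1) = pVE μ hr π t *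
        ∑ i, (π ⟨(μ t : Fin n → ℝ), hr t⟩ : Fin n → ℝ) i *
          ((μ (t+1) : Fin n → ℝ) i / (μ t : Fin n → ℝ) i) := rfl
    rw [hstep, Real.log_mul (ne_of_gt (pVE_pos μ hr π t)) (ne_of_gt hS), ih,
      Finset.sum_range_succ]
    rfl

/-- Lemma 3.2: finite state space: existence of the asymptotic growth rate
`W(π) = ∫ ℓ_π dℙ`, existence of a log-optimal portfolio map, and its characterization. -/
theorem stmt6 {n : ℕ} (hn : 2 ≤ n) (E : Finset (Fin n → ℝ)) (hE : ∀ p ∈ E, p ∈ oS n)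
    (μ : ℕ → ↥(oS n)) (hr : ∀ t, (μ t : Fin n → ℝ) ∈ E)
    (P : ↥E × ↥E → ℝ) (hP0 : ∀ x, 0 ≤ P x) (hP1 : ∑ x : ↥E × ↥E, P x = 1)
    (hweak : ∀ x : ↥E × ↥E,
      Tendsto (fun t : ℕ =>
          (∑ s ∈ Finset.range t,
            if (⟨(μ s : Fin n → ℝ), hr s⟩ : ↥E) = x.1 ∧
               (⟨(μ (s + 1) : Fin n → ℝ), hr (s + 1)⟩ : ↥E) = x.2 then (1 : ℝ) else 0) / t)
        atTop (𝓝 (P x))) :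
    (∀ π : ↥E → ↥(cS n),
      Tendsto (fun t : ℕ => Real.log (pVE μ hr π t) / t)
        atTop (𝓝 (∑ x : ↥E × ↥E, P x * lE π x.1 x.2))) ∧
    (∃ πs : ↥E → ↥(cS n), ∀ π : ↥E → ↥(cS n),
      (∑ x : ↥E × ↥E, P x * lE π x.1 x.2) ≤ ∑ x : ↥E × ↥E, P x * lE πs x.1 x.2) ∧
    (∀ πs : ↥E → ↥(cS n),
      (∀ π : ↥E → ↥(cS n),
        (∑ x : ↥E × ↥E, P x * lE π x.1 x.2) ≤ ∑ x : ↥E × ↥E, P x * lE πs x.1 x.2) →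
      ∀ p : ↥E, 0 < ∑ q : ↥E, P (p, q) →
        ∀ x ∈ cS n,
          (∑ q : ↥E, P (p, q) *
              Real.log (∑ i, x i * ((q : Fin n → ℝ) i / (p : Fin n → ℝ) i))) ≤
            ∑ q : ↥E, P (p, q) * lE πs p q) := by
  -- the counting function
  set N : ℕ → ↥E × ↥E → ℝ := fun t x =>
    ∑ s ∈ Finset.range t,
      if (⟨(μ s : Fin n → ℝ), hr s⟩ : ↥E) = x.1 ∧
         (⟨(μ (s + 1) : Fin n → ℝ), hr (s + 1)⟩ : ↥E) = x.2 then (1 : ℝ) else 0 with hN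
  -- part (a)
  have partA : ∀ π : ↥E → ↥(cS n),
      Tendsto (fun t : ℕ => Real.log (pVE μ hr π t) / t)
        atTop (𝓝 (∑ x : ↥E × ↥E, P x * lE π x.1 x.2)) := by
    intro π
    have key : ∀ t : ℕ, Real.log (pVE μ hr π t) / t =
        ∑ x : ↥E × ↥E, (N t x / t) * lE π x.1 x.2 := by
      intro t
      rw [log_pVE]
      have h1 : ∀ s : ℕ,
          lE π ⟨(μ s : Fin n → ℝ), hr s⟩ ⟨(μ (s+1) : Fin n → ℝ), hr (s+1)⟩ =
          ∑ x : ↥E × ↥E,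
            if ((⟨(μ s : Fin n → ℝ), hr s⟩ : ↥E), (⟨(μ (s+1) : Fin n → ℝ), hr (s+1)⟩ : ↥E)) = x
            then lE π x.1 x.2 else 0 := by
        intro s
        rw [Finset.sum_ite_eq Finset.univ
          ((⟨(μ s : Fin n → ℝ), hr s⟩ : ↥E), (⟨(μ (s+1) : Fin n → ℝ), hr (s+1)⟩ : ↥E))
          (fun x => lE π x.1 x.2)]
        simp
      calc (∑ s ∈ Finset.range t,
            lE π ⟨(μ s : Fin n → ℝ), hr s⟩ ⟨(μ (s+1) : Fin n → ℝ), hr (s+1)⟩) / t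
          = (∑ s ∈ Finset.range t, ∑ x : ↥E × ↥E,
              if ((⟨(μ s : Fin n → ℝ), hr s⟩ : ↥E), (⟨(μ (s+1) : Fin n → ℝ), hr (s+1)⟩ : ↥E)) = x
              then lE π x.1 x.2 else 0) / t := by
            congr 1; exact Finset.sum_congr rfl (fun s _ => h1 s)
        _ = (∑ x : ↥E × ↥E, ∑ s ∈ Finset.range t,
              if ((⟨(μ s : Fin n → ℝ), hr s⟩ : ↥E), (⟨(μ (s+1) : Fin n → ℝ), hr (s+1)⟩ : ↥E)) = x
              then lE π x.1 x.2 else 0) / t := by rw [Finset.sum_comm]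
        _ = ∑ x : ↥E × ↥E, (N t x / t) * lE π x.1 x.2 := by
            rw [Finset.sum_div]
            refine Finset.sum_congr rfl (fun x _ => ?_)
            have : (∑ s ∈ Finset.range t,
                if ((⟨(μ s : Fin n → ℝ), hr s⟩ : ↥E), (⟨(μ (s+1) : Fin n → ℝ), hr (s+1)⟩ : ↥E)) = x
                then lE π x.1 x.2 else 0) = N t x * lE π x.1 x.2 := by
              rw [hN, Finset.sum_mul]
              refine Finset.sum_congr rfl (fun s _ => ?_)
              simp only [Prod.ext_iff, ite_mul, one_mul, zero_mul]
            rw [this, mul_div_right_comm]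
    refine Tendsto.congr (fun t => (key t).symm) ?_
    exact tendsto_finset_sum _ (fun x _ => (hweak x).mul_const _)
  refine ⟨partA, ?_, ?_⟩
  · -- part (b): existence of a maximizer, chosen statewise
    have hcomp : IsCompact (cS n) := isCompact_stdSimplex ℝ (Fin n)
    have hne : (cS n).Nonempty := by
      refine ⟨fun j => if (⟨0, by omega⟩ : Fin n) = j then 1 else 0, ?_⟩
      exact ite_eq_mem_stdSimplex ℝ _
    have hcont : ∀ p : ↥E, ContinuousOn
        (fun x : Fin n → ℝ => ∑ q : ↥E,
          P (p, q) * Real.log (∑ i, x i * ((q : Fin n → ℝ) i / (p : Fin n → ℝ) i)))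
        (cS n) := by
      intro p
      refine continuousOn_finset_sum _ (fun q _ => ContinuousOn.mul continuousOn_const ?_)
      refine ContinuousOn.log ?_ ?_
      · exact (continuous_finset_sum _ (fun i _ =>
          (continuous_apply i).mul continuous_const)).continuousOn
      · intro x hx
        exact ne_of_gt (sum_ratio_pos hx (hE _ p.2) (hE _ q.2))
    have hmax : ∀ p : ↥E, ∃ y ∈ cS n, ∀ z ∈ cS n,
        (∑ q : ↥E, P (p, q) * Real.log (∑ i, z i * ((q : Fin n → ℝ) i / (p : Fin n → ℝ) i))) ≤
        ∑ q : ↥E, P (p, q) * Real.log (∑ i, y i * ((q : Fin n → ℝ) i / (p : Fin n → ℝ) i)) := by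
      intro p
      obtain ⟨yy, hyy, hmaxy⟩ := hcomp.exists_isMaxOn hne (hcont p)
      exact ⟨yy, hyy, fun z hz => hmaxy hz⟩
    choose y hy hymax using hmax
    refine ⟨fun p => ⟨y p, hy p⟩, fun π => ?_⟩
    rw [Fintype.sum_prod_type, Fintype.sum_prod_type]
    refine Finset.sum_le_sum (fun p _ => ?_)
    exact hymax p ((π p : Fin n → ℝ)) (π p).2
  · -- part (c)
    intro πs hπs p _ x hx
    set π' : ↥E → ↥(cS n) := Function.update πs p ⟨x, hx⟩ with hπ'
    have h := hπs π'
    rw [Fintype.sum_prod_type, Fintype.sum_prod_type] at h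
    have hG : ∀ p' : ↥E, p' ≠ p →
        (∑ q : ↥E, P (p', q) * lE π' p' q) = ∑ q : ↥E, P (p', q) * lE πs p' q := by
      intro p' hp'
      refine Finset.sum_congr rfl (fun q _ => ?_)
      have : π' p' = πs p' := Function.update_of_ne hp' _ _
      rw [lE, lE, this]
    have hsplit1 : (∑ q : ↥E, P (p, q) * lE π' p q) +
        ∑ p' ∈ Finset.univ.erase p, ∑ q : ↥E, P (p', q) * lE π' p' q =
        ∑ p' : ↥E, ∑ q : ↥E, P (p', q) * lE π' p' q :=
      Finset.add_sum_erase Finset.univ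
        (fun p' => ∑ q : ↥E, P (p', q) * lE π' p' q) (Finset.mem_univ p)
    have hsplit2 : (∑ q : ↥E, P (p, q) * lE πs p q) +
        ∑ p' ∈ Finset.univ.erase p, ∑ q : ↥E, P (p', q) * lE πs p' q =
        ∑ p' : ↥E, ∑ q : ↥E, P (p', q) * lE πs p' q :=
      Finset.add_sum_erase Finset.univ
        (fun p' => ∑ q : ↥E, P (p', q) * lE πs p' q) (Finset.mem_univ p)
    have heq : ∑ p' ∈ Finset.univ.erase p, ∑ q : ↥E, P (p', q) * lE π' p' q =
        ∑ p' ∈ Finset.univ.erase p, ∑ q : ↥E, P (p', q) * lE πs p' q :=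
      Finset.sum_congr rfl (fun p' hp' => hG p' (Finset.ne_of_mem_erase hp'))
    have hple : (∑ q : ↥E, P (p, q) * lE π' p q) ≤ ∑ q : ↥E, P (p, q) * lE πs p q := by
      linarith [hsplit1, hsplit2, heq, h]
    have hlhs : (∑ q : ↥E, P (p, q) *
        Real.log (∑ i, x i * ((q : Fin n → ℝ) i / (p : Fin n → ℝ) i))) =
        ∑ q : ↥E, P (p, q) * lE π' p q := by
      refine Finset.sum_congr rfl (fun q _ => ?_)
      have : π' p = ⟨x, hx⟩ := Function.update_self _ _ _
      rw [lE, this]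
    rw [hlhs]
    exact hple
end
end

section
/- Suppose the market weight sequence {μ(t)} satisfies Assumption (M) and takes values in a finite set E ⊂ Δ_n. Let Θ = (Δ̄_n)^E, with the topology of pointwise convergence, and suppose the initial distribution ν_0 on Θ has full support. Then Cover's portfolio π̂(t) = ∫_Θ π(μ(t)) dν_t(π) is universal: lim_{t→∞} (1/t) log ( V̂(t)/V*(t) ) = 0, where V̂(t) is the relative value of π̂ and V*(t) = sup_{π ∈ Θ} V_π(t). -/
open scoped Classical

open MeasureTheory Filter Topology Finset
open scoped ENNReal

noncomputable section

namespace Stmt7Aux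

variable {n : ℕ} {M : ℝ} {E : Finset (Fin n → ℝ)}

lemma pVE_succ (μ : ℕ → ↥(oS n)) (hr : ∀ t, (μ t : Fin n → ℝ) ∈ E)
    (π : ↥E → ↥(cS n)) (t : ℕ) :
    pVE μ hr π (t + 1) = pVE μ hr π t *
      ∑ i, (π ⟨(μ t : Fin n → ℝ), hr t⟩ : Fin n → ℝ) i *
        ((μ (t + 1) : Fin n → ℝ) i / (μ t : Fin n → ℝ) i) := rfl

lemma fac_bounds (hM : 0 < M) (μ : ℕ → ↥(oS n)) (hAM : AssumptionM M μ)
    (w : ↥(cS n)) (t : ℕ) :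
    1 / M ≤ (∑ i, (w : Fin n → ℝ) i * ((μ (t + 1) : Fin n → ℝ) i / (μ t : Fin n → ℝ) i)) ∧
      (∑ i, (w : Fin n → ℝ) i * ((μ (t + 1) : Fin n → ℝ) i / (μ t : Fin n → ℝ) i)) ≤ M := by
  obtain ⟨hw0, hw1⟩ := w.2
  constructor
  · calc 1 / M = ∑ i, (w : Fin n → ℝ) i * (1 / M) := by
          rw [← Finset.sum_mul, hw1, one_mul]
      _ ≤ _ := Finset.sum_le_sum fun i _ => mul_le_mul_of_nonneg_left (hAM t i).1 (hw0 i)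
  · calc _ ≤ ∑ i, (w : Fin n → ℝ) i * M :=
          Finset.sum_le_sum fun i _ => mul_le_mul_of_nonneg_left (hAM t i).2 (hw0 i)
      _ = M := by rw [← Finset.sum_mul, hw1, one_mul]

lemma pVE_bounds (hM : 0 < M) (μ : ℕ → ↥(oS n)) (hAM : AssumptionM M μ)
    (hr : ∀ t, (μ t : Fin n → ℝ) ∈ E) (π : ↥E → ↥(cS n)) (t : ℕ) :
    (1 / M) ^ t ≤ pVE μ hr π t ∧ pVE μ hr π t ≤ M ^ t := by
  induction t with
  | zero => simp [pVE, relV]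
  | succ t ih =>
    have hf := fac_bounds hM μ hAM (π ⟨(μ t : Fin n → ℝ), hr t⟩) t
    have h1M : (0:ℝ) < 1 / M := by positivity
    have hVnn : (0:ℝ) ≤ pVE μ hr π t := le_trans (pow_nonneg h1M.le t) ih.1
    rw [pVE_succ, pow_succ, pow_succ]
    exact ⟨mul_le_mul ih.1 hf.1 h1M.le hVnn,
      mul_le_mul ih.2 hf.2 (le_trans h1M.le hf.1) (pow_nonneg hM.le t)⟩

lemma pVE_pos (hM : 0 < M) (μ : ℕ → ↥(oS n)) (hAM : AssumptionM M μ)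
    (hr : ∀ t, (μ t : Fin n → ℝ) ∈ E) (π : ↥E → ↥(cS n)) (t : ℕ) :
    0 < pVE μ hr π t :=
  lt_of_lt_of_le (pow_pos (by positivity) t) (pVE_bounds hM μ hAM hr π t).1

lemma pVE_compare (hM : 0 < M) {δ : ℝ} (hδ : 0 ≤ δ) (μ : ℕ → ↥(oS n))
    (hAM : AssumptionM M μ) (hr : ∀ t, (μ t : Fin n → ℝ) ∈ E)
    (π πs : ↥E → ↥(cS n))
    (hclose : ∀ p i, |(π p : Fin n → ℝ) i - (πs p : Fin n → ℝ) i| ≤ δ)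
    (hc : 0 ≤ 1 - n * δ * M ^ 2) (t : ℕ) :
    (1 - n * δ * M ^ 2) ^ t * pVE μ hr πs t ≤ pVE μ hr π t := by
  induction t with
  | zero => simp [pVE, relV]
  | succ t ih =>
    set p : ↥E := ⟨(μ t : Fin n → ℝ), hr t⟩ with hp
    set f : ℝ := ∑ i, (π p : Fin n → ℝ) i * ((μ (t + 1) : Fin n → ℝ) i / (μ t : Fin n → ℝ) i)
    set fs : ℝ := ∑ i, (πs p : Fin n → ℝ) i * ((μ (t + 1) : Fin n → ℝ) i / (μ t : Fin n → ℝ) i)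
    have hfsM := fac_bounds hM μ hAM (πs p) t
    have hfM := fac_bounds hM μ hAM (π p) t
    have h1M : (0:ℝ) < 1 / M := by positivity
    have h2 : fs - f ≤ n * δ * M := by
      have heq : fs - f = ∑ i, ((πs p : Fin n → ℝ) i - (π p : Fin n → ℝ) i) *
          ((μ (t + 1) : Fin n → ℝ) i / (μ t : Fin n → ℝ) i) := by
        rw [← Finset.sum_sub_distrib]
        exact Finset.sum_congr rfl fun i _ => (sub_mul _ _ _).symm
      rw [heq]
      have : ∀ i ∈ Finset.univ, ((πs p : Fin n → ℝ) i - (π p : Fin n → ℝ) i) *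
          ((μ (t + 1) : Fin n → ℝ) i / (μ t : Fin n → ℝ) i) ≤ δ * M := by
        intro i _
        have hrnn : (0:ℝ) ≤ (μ (t + 1) : Fin n → ℝ) i / (μ t : Fin n → ℝ) i :=
          le_trans h1M.le (hAM t i).1
        calc ((πs p : Fin n → ℝ) i - (π p : Fin n → ℝ) i) *
              ((μ (t + 1) : Fin n → ℝ) i / (μ t : Fin n → ℝ) i)
            ≤ |(πs p : Fin n → ℝ) i - (π p : Fin n → ℝ) i| *
              ((μ (t + 1) : Fin n → ℝ) i / (μ t : Fin n → ℝ) i) :=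
              mul_le_mul_of_nonneg_right (le_abs_self _) hrnn
          _ ≤ δ * M := mul_le_mul (by rw [abs_sub_comm]; exact hclose p i)
              (hAM t i).2 hrnn hδ
      calc _ ≤ ∑ _i : Fin n, δ * M := Finset.sum_le_sum this
        _ = n * δ * M := by
            rw [Finset.sum_const, Finset.card_univ, Fintype.card_fin, nsmul_eq_mul]; ring
    have h3 : (n:ℝ) * δ * M ≤ n * δ * M ^ 2 * fs := by
      have hnn : (0:ℝ) ≤ (n:ℝ) * δ * M ^ 2 := by positivity
      have := mul_le_mul_of_nonneg_left hfsM.1 hnn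
      calc (n:ℝ) * δ * M = n * δ * M ^ 2 * (1 / M) := by field_simp
        _ ≤ _ := this
    have key : (1 - n * δ * M ^ 2) * fs ≤ f := by nlinarith
    have hVs_nn : (0:ℝ) ≤ pVE μ hr πs t :=
      (pVE_pos hM μ hAM hr πs t).le
    have hV_nn : (0:ℝ) ≤ pVE μ hr π t := (pVE_pos hM μ hAM hr π t).le
    have step : ((1 - n * δ * M ^ 2) ^ t * pVE μ hr πs t) * ((1 - n * δ * M ^ 2) * fs)
        ≤ pVE μ hr π t * f :=
      mul_le_mul ih key (mul_nonneg hc (le_trans h1M.le hfsM.1)) hV_nn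
    calc (1 - n * δ * M ^ 2) ^ (t + 1) * pVE μ hr πs (t + 1)
        = ((1 - n * δ * M ^ 2) ^ t * pVE μ hr πs t) * ((1 - n * δ * M ^ 2) * fs) := by
          rw [pVE_succ]; ring
      _ ≤ pVE μ hr π t * f := step
      _ = pVE μ hr π (t + 1) := (pVE_succ μ hr π t).symm

lemma pVE_continuous (μ : ℕ → ↥(oS n)) (hr : ∀ t, (μ t : Fin n → ℝ) ∈ E) (t : ℕ) :
    Continuous fun π : ↥E → ↥(cS n) => pVE μ hr π t := by
  induction t with
  | zero =>
    have : (fun π : ↥E → ↥(cS n) => pVE μ hr π 0) = fun _ => 1 := rfl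
    rw [this]; exact continuous_const
  | succ t ih =>
    have : (fun π : ↥E → ↥(cS n) => pVE μ hr π (t + 1)) = fun π =>
        pVE μ hr π t * ∑ i, (π ⟨(μ t : Fin n → ℝ), hr t⟩ : Fin n → ℝ) i *
          ((μ (t + 1) : Fin n → ℝ) i / (μ t : Fin n → ℝ) i) := rfl
    rw [this]
    refine ih.mul (continuous_finset_sum _ fun i _ => ?_)
    exact ((continuous_apply i).comp
      (continuous_subtype_val.comp (continuous_apply (A := fun _ : ↥E => ↥(cS n)) _))).mul continuous_const

lemma isCompact_cS (n : ℕ) : IsCompact (cS n) := by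
  have hsub : cS n ⊆ Set.pi Set.univ fun _ : Fin n => Set.Icc (0:ℝ) 1 := by
    intro q hq i _
    obtain ⟨h0, h1⟩ := hq
    exact ⟨h0 i, by
      calc q i ≤ ∑ j, q j := Finset.single_le_sum (fun j _ => h0 j) (Finset.mem_univ i)
        _ = 1 := h1⟩
  have hclosed : IsClosed (cS n) := by
    have heq : cS n = (⋂ i, {q : Fin n → ℝ | 0 ≤ q i}) ∩ {q | ∑ i, q i = 1} := by
      ext q; simp [cS, Set.mem_iInter]
    rw [heq]
    exact (isClosed_iInter fun i =>
        isClosed_le continuous_const (continuous_apply i)).inter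
      (isClosed_eq (continuous_finset_sum _ fun i _ => continuous_apply i) continuous_const)
  exact (isCompact_univ_pi fun _ => isCompact_Icc).of_isClosed_subset hclosed hsub

lemma cS_nonempty (hn : 0 < n) : (cS n).Nonempty := by
  refine ⟨fun _ => 1 / n, fun i => by positivity, ?_⟩
  rw [Finset.sum_const, Finset.card_univ, Fintype.card_fin, nsmul_eq_mul]
  field_simp

def nbhd (c : ↥E → ↥(cS n)) (δ : ℝ) : Set (↥E → ↥(cS n)) :=
  {π | ∀ p i, |(π p : Fin n → ℝ) i - (c p : Fin n → ℝ) i| < δ}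

lemma mem_nbhd {c π : ↥E → ↥(cS n)} {δ : ℝ} :
    π ∈ nbhd c δ ↔ ∀ p i, |(π p : Fin n → ℝ) i - (c p : Fin n → ℝ) i| < δ := Iff.rfl

lemma isOpen_nbhd (c : ↥E → ↥(cS n)) (δ : ℝ) : IsOpen (nbhd c δ) := by
  have heq : nbhd c δ = ⋂ p, ⋂ i,
      {π : ↥E → ↥(cS n) | |(π p : Fin n → ℝ) i - (c p : Fin n → ℝ) i| < δ} := by
    ext π; simp [nbhd, Set.mem_iInter]
  rw [heq]
  refine isOpen_iInter_of_finite fun p => isOpen_iInter_of_finite fun i => ?_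
  exact isOpen_lt ((((continuous_apply i).comp
    (continuous_subtype_val.comp (continuous_apply (A := fun _ : ↥E => ↥(cS n)) p))).sub continuous_const).abs)
    continuous_const

lemma self_mem_nbhd (c : ↥E → ↥(cS n)) {δ : ℝ} (hδ : 0 < δ) : c ∈ nbhd c δ := by
  intro p i; simpa using hδ

end Stmt7Aux

/-- Theorem 3.3(i): finite state space: Cover's portfolio is universal,
`(1/t) log (V̂(t)/V*(t)) → 0`, where `V̂(t) = ∫_Θ V_π(t) dν₀(π)` and
`V*(t) = sup_{π ∈ Θ} V_π(t)`, `Θ = (Δ̄ₙ)^E`. -/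
theorem stmt7 {n : ℕ} (hn : 2 ≤ n) (M : ℝ) (hM : 0 < M)
    (E : Finset (Fin n → ℝ)) (hE : ∀ p ∈ E, p ∈ oS n)
    (μ : ℕ → ↥(oS n)) (hAM : AssumptionM M μ) (hr : ∀ t, (μ t : Fin n → ℝ) ∈ E)
    (ν0 : Measure (↥E → ↥(cS n))) [IsProbabilityMeasure ν0]
    (hsupp : ∀ U : Set (↥E → ↥(cS n)), IsOpen U → U.Nonempty → 0 < ν0 U) :
    Tendsto (fun t : ℕ =>
        Real.log ((∫ π : ↥E → ↥(cS n), pVE μ hr π t ∂ν0) /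
          (⨆ π : ↥E → ↥(cS n), pVE μ hr π t)) / t)
      atTop (𝓝 0) := by
  open Stmt7Aux in
  haveI hcs : CompactSpace ↥(cS n) := isCompact_iff_compactSpace.mp (Stmt7Aux.isCompact_cS n)
  haveI hne : Nonempty ↥(cS n) := (Stmt7Aux.cS_nonempty (by omega)).to_subtype
  haveI hΘne : Nonempty (↥E → ↥(cS n)) := ⟨fun _ => Classical.arbitrary _⟩
  set Θ := (↥E → ↥(cS n))
  have hnR : (0:ℝ) < n := by positivity
  -- integrability
  have hVint : ∀ t, Integrable (fun π : Θ => pVE μ hr π t) ν0 := by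
    intro t
    refine Integrable.mono' (integrable_const (M ^ t))
      ((Stmt7Aux.pVE_continuous μ hr t).aestronglyMeasurable) (ae_of_all _ fun π => ?_)
    rw [Real.norm_eq_abs, abs_of_pos (Stmt7Aux.pVE_pos hM μ hAM hr π t)]
    exact (Stmt7Aux.pVE_bounds hM μ hAM hr π t).2
  have hbdd : ∀ t, BddAbove (Set.range fun π : Θ => pVE μ hr π t) := fun t =>
    ⟨M ^ t, by rintro _ ⟨π, rfl⟩; exact (Stmt7Aux.pVE_bounds hM μ hAM hr π t).2⟩
  have hS_pos : ∀ t, 0 < ⨆ π : Θ, pVE μ hr π t := fun t =>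
    lt_of_lt_of_le (Stmt7Aux.pVE_pos hM μ hAM hr (Classical.arbitrary Θ) t)
      (le_ciSup (hbdd t) _)
  have hIpos : ∀ t, 0 < ∫ π : Θ, pVE μ hr π t ∂ν0 := by
    intro t
    have h := integral_mono (integrable_const ((1 / M) ^ t)) (hVint t)
      (fun π => (Stmt7Aux.pVE_bounds hM μ hAM hr π t).1)
    rw [integral_const, probReal_univ, one_smul] at h
    exact lt_of_lt_of_le (by positivity) h
  have hIle : ∀ t, (∫ π : Θ, pVE μ hr π t ∂ν0) ≤ ⨆ π : Θ, pVE μ hr π t := by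
    intro t
    have h := integral_mono (hVint t) (integrable_const (⨆ π : Θ, pVE μ hr π t))
      (fun π => le_ciSup (hbdd t) π)
    rwa [integral_const, probReal_univ, one_smul] at h
  rw [Metric.tendsto_atTop]
  intro ε hε
  -- choose δ so that 1 - n δ M² = exp(-ε/3)
  set c : ℝ := Real.exp (-(ε / 3)) with hcdef
  have hc0 : 0 < c := Real.exp_pos _
  have hc1 : c < 1 := by
    rw [hcdef, Real.exp_lt_one_iff]; linarith
  set δ : ℝ := (1 - c) / (n * M ^ 2) with hδdef
  have hδ0 : 0 < δ := by
    apply div_pos (by linarith) (by positivity)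
  have hcδ : 1 - n * δ * M ^ 2 = c := by
    rw [hδdef]; field_simp; ring
  -- finite subcover
  have hcover : (Set.univ : Set Θ) ⊆ ⋃ cc : Θ, Stmt7Aux.nbhd cc (δ / 2) := fun π _ =>
    Set.mem_iUnion.mpr ⟨π, Stmt7Aux.self_mem_nbhd π (half_pos hδ0)⟩
  obtain ⟨s, hs⟩ := isCompact_univ.elim_finite_subcover
    (fun cc : Θ => Stmt7Aux.nbhd cc (δ / 2)) (fun cc => Stmt7Aux.isOpen_nbhd cc _) hcover
  have hsne : s.Nonempty := by
    obtain ⟨cc, hcc, -⟩ := Set.mem_iUnion₂.mp (hs (Set.mem_univ (Classical.arbitrary Θ)))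
    exact ⟨cc, hcc⟩
  set κ : ℝ := s.inf' hsne fun cc => (ν0 (Stmt7Aux.nbhd cc (δ / 2))).toReal with hκdef
  have hκpos : 0 < κ := by
    rw [hκdef, Finset.lt_inf'_iff]
    intro cc _
    exact ENNReal.toReal_pos
      (hsupp _ (Stmt7Aux.isOpen_nbhd cc _) ⟨cc, Stmt7Aux.self_mem_nbhd cc (half_pos hδ0)⟩).ne'
      (measure_ne_top ν0 _)
  -- key lower bound
  have hlow : ∀ t, κ * (c ^ t * ((⨆ π : Θ, pVE μ hr π t) / 2)) ≤
      ∫ π : Θ, pVE μ hr π t ∂ν0 := by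
    intro t
    obtain ⟨πs, hπs⟩ := exists_lt_of_lt_ciSup (half_lt_self (hS_pos t))
    obtain ⟨cc, hccs, hπscc⟩ := Set.mem_iUnion₂.mp (hs (Set.mem_univ πs))
    have hclose : ∀ π ∈ Stmt7Aux.nbhd cc (δ / 2), ∀ p i,
        |(π p : Fin n → ℝ) i - (πs p : Fin n → ℝ) i| ≤ δ := by
      intro π hπ p i
      calc |(π p : Fin n → ℝ) i - (πs p : Fin n → ℝ) i|
          ≤ |(π p : Fin n → ℝ) i - (cc p : Fin n → ℝ) i| +
            |(cc p : Fin n → ℝ) i - (πs p : Fin n → ℝ) i| := abs_sub_le _ _ _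
        _ ≤ δ / 2 + δ / 2 := add_le_add (hπ p i).le (by rw [abs_sub_comm]; exact (hπscc p i).le)
        _ = δ := add_halves δ
    have hVlow : ∀ π ∈ Stmt7Aux.nbhd cc (δ / 2),
        c ^ t * pVE μ hr πs t ≤ pVE μ hr π t := by
      intro π hπ
      have h := Stmt7Aux.pVE_compare hM hδ0.le μ hAM hr π πs (hclose π hπ)
        (by rw [hcδ]; exact hc0.le) t
      rwa [hcδ] at h
    have hset := setIntegral_ge_of_const_le ((Stmt7Aux.isOpen_nbhd cc (δ / 2)).measurableSet)
      (measure_ne_top ν0 _) hVlow ((hVint t).integrableOn)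
    calc κ * (c ^ t * ((⨆ π : Θ, pVE μ hr π t) / 2))
        ≤ (ν0 (Stmt7Aux.nbhd cc (δ / 2))).toReal * (c ^ t * pVE μ hr πs t) := by
          refine mul_le_mul (Finset.inf'_le _ hccs)
            (mul_le_mul_of_nonneg_left hπs.le (pow_nonneg hc0.le t))
            (mul_nonneg (pow_nonneg hc0.le t) (div_nonneg (hS_pos t).le (by norm_num))) ?_
          exact ENNReal.toReal_nonneg
      _ = (c ^ t * pVE μ hr πs t) * (ν0 (Stmt7Aux.nbhd cc (δ / 2))).toReal := by ring
      _ ≤ ∫ π in Stmt7Aux.nbhd cc (δ / 2), pVE μ hr π t ∂ν0 := by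
          rw [measureReal_def, smul_eq_mul] at hset; linarith
      _ ≤ ∫ π : Θ, pVE μ hr π t ∂ν0 := setIntegral_le_integral (hVint t)
          (ae_of_all _ fun π => (Stmt7Aux.pVE_pos hM μ hAM hr π t).le)
  -- tail
  have htail : Tendsto (fun t : ℕ => Real.log (κ / 2) / t) atTop (𝓝 0) :=
    tendsto_const_div_atTop_nhds_zero_nat _
  obtain ⟨N, hN⟩ := (Metric.tendsto_atTop.mp htail) (ε / 3) (by positivity)
  refine ⟨max N 1, fun t ht => ?_⟩
  have ht1 : 1 ≤ t := le_trans (le_max_right _ _) ht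
  have htN : N ≤ t := le_trans (le_max_left _ _) ht
  have htpos : (0:ℝ) < t := by exact_mod_cast ht1
  set I := ∫ π : Θ, pVE μ hr π t ∂ν0 with hI
  set S := ⨆ π : Θ, pVE μ hr π t with hSdef
  have hISpos : 0 < I / S := div_pos (hIpos t) (hS_pos t)
  -- upper bound : log(I/S)/t ≤ 0
  have hL_le : Real.log (I / S) / t ≤ 0 :=
    div_nonpos_of_nonpos_of_nonneg (Real.log_nonpos hISpos.le
      ((div_le_one (hS_pos t)).mpr (hIle t))) htpos.le
  -- lower bound
  have h1 : κ / 2 * c ^ t ≤ I / S := by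
    rw [le_div_iff₀ (hS_pos t)]
    calc κ / 2 * c ^ t * S = κ * (c ^ t * (S / 2)) := by ring
      _ ≤ I := hlow t
  have hlog : Real.log (κ / 2) + t * Real.log c ≤ Real.log (I / S) := by
    calc Real.log (κ / 2) + t * Real.log c = Real.log (κ / 2 * c ^ t) := by
          rw [Real.log_mul (by positivity) (by positivity), Real.log_pow]
      _ ≤ Real.log (I / S) := Real.log_le_log (by positivity) h1
  have h2 : (Real.log (κ / 2) + t * Real.log c) / t ≤ Real.log (I / S) / t := by
    gcongr
  have h3 : (Real.log (κ / 2) + t * Real.log c) / t = Real.log (κ / 2) / t + Real.log c := by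
    field_simp
  have h4 : |Real.log (κ / 2) / t| < ε / 3 := by
    have := hN t htN
    rwa [Real.dist_eq, sub_zero] at this
  have hlogc : Real.log c = -(ε / 3) := Real.log_exp _
  have h5 : -(ε / 3) < Real.log (κ / 2) / t := (abs_lt.mp h4).1
  rw [Real.dist_eq, sub_zero, abs_lt]
  constructor
  · have : -(ε / 3) + -(ε / 3) < Real.log (I / S) / t := by
      calc -(ε / 3) + -(ε / 3) < Real.log (κ / 2) / t + Real.log c := by
            rw [hlogc]; linarith
        _ = (Real.log (κ / 2) + t * Real.log c) / t := h3.symm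
        _ ≤ _ := h2
    linarith
  · exact lt_of_le_of_lt hL_le hε
end
end

section
/- Suppose the market weight sequence {μ(t)} satisfies Assumption (M), takes values in a finite set E ⊂ Δ_n, and the empirical measures ℙ_t converge weakly to a probability measure ℙ on E × E. Let Θ = (Δ̄_n)^E with the topology of pointwise convergence and let ν_0 be an initial distribution on Θ with full support. Then the wealth distributions {ν_t}_{t=0}^∞ satisfy the large deviation principle on Θ with the convex rate function I(π) = W* − W(π), where W(π) = ∫_{E×E} ℓ_π dℙ and W* = max_{π∈Θ} W(π). -/
open scoped Classical

open MeasureTheory Filter Topology Finset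
open scoped ENNReal

noncomputable section

/-! ### Auxiliary definitions and lemmas -/

/-- The linear functional `S_π(x) = Σ_i π_i(x₁) x₂ᵢ/x₁ᵢ`. -/
def Sfun {n : ℕ} {E : Finset (Fin n → ℝ)} (π : ↥E → ↥(cS n)) (x : ↥E × ↥E) : ℝ :=
  ∑ i, (π x.1 : Fin n → ℝ) i * ((x.2 : Fin n → ℝ) i / (x.1 : Fin n → ℝ) i)

lemma lE_eq {n : ℕ} {E : Finset (Fin n → ℝ)} (π : ↥E → ↥(cS n)) (x : ↥E × ↥E) :
    lE π x.1 x.2 = Real.log (Sfun π x) := rfl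

lemma cS_eq (n : ℕ) : cS n = stdSimplex ℝ (Fin n) := rfl

instance (n : ℕ) : CompactSpace ↥(cS n) :=
  isCompact_iff_compactSpace.1 (by rw [cS_eq]; exact isCompact_stdSimplex _ _)

lemma exists_bounds {n : ℕ} (hn : 2 ≤ n) {E : Finset (Fin n → ℝ)}
    (hE : ∀ p ∈ E, p ∈ oS n) (hne : Nonempty ↥E) :
    ∃ c C : ℝ, 0 < c ∧ ∀ (π : ↥E → ↥(cS n)) (x : ↥E × ↥E),
      c ≤ Sfun π x ∧ Sfun π x ≤ C := by
  have hnn : Nonempty (Fin n) := ⟨⟨0, by omega⟩⟩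
  set r : ↥E × ↥E × Fin n → ℝ :=
    fun y => (y.2.1 : Fin n → ℝ) y.2.2 / (y.1 : Fin n → ℝ) y.2.2 with hrdef
  have hune : (Finset.univ : Finset (↥E × ↥E × Fin n)).Nonempty := Finset.univ_nonempty
  have hrpos : ∀ y, 0 < r y := by
    rintro ⟨p, q, i⟩
    exact div_pos ((hE _ q.2).1 i) ((hE _ p.2).1 i)
  refine ⟨Finset.univ.inf' hune r, Finset.univ.sup' hune r, ?_, ?_⟩
  · obtain ⟨y, -, hy⟩ := Finset.exists_mem_eq_inf' hune r
    rw [hy]; exact hrpos y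
  · intro π x
    have hπ0 : ∀ i, 0 ≤ (π x.1 : Fin n → ℝ) i := fun i => (π x.1).2.1 i
    have hπ1 : ∑ i, (π x.1 : Fin n → ℝ) i = 1 := (π x.1).2.2
    constructor
    · calc Finset.univ.inf' hune r
          = ∑ i, (π x.1 : Fin n → ℝ) i * Finset.univ.inf' hune r := by
            rw [← Finset.sum_mul, hπ1, one_mul]
        _ ≤ Sfun π x := by
            refine Finset.sum_le_sum fun i _ => ?_
            exact mul_le_mul_of_nonneg_left
              (Finset.inf'_le r (Finset.mem_univ (x.1, x.2, i))) (hπ0 i)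
    · calc Sfun π x
          ≤ ∑ i, (π x.1 : Fin n → ℝ) i * Finset.univ.sup' hune r := by
            refine Finset.sum_le_sum fun i _ => ?_
            exact mul_le_mul_of_nonneg_left
              (Finset.le_sup' r (Finset.mem_univ (x.1, x.2, i))) (hπ0 i)
        _ = Finset.univ.sup' hune r := by rw [← Finset.sum_mul, hπ1, one_mul]

lemma pVE_pos_log {n : ℕ} {E : Finset (Fin n → ℝ)}
    {c C : ℝ} (hc : 0 < c)
    (hSb : ∀ (π : ↥E → ↥(cS n)) (x : ↥E × ↥E), c ≤ Sfun π x ∧ Sfun π x ≤ C)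
    (μ : ℕ → ↥(oS n)) (hr : ∀ t, (μ t : Fin n → ℝ) ∈ E) (π : ↥E → ↥(cS n)) (t : ℕ) :
    0 < pVE μ hr π t ∧ Real.log (pVE μ hr π t) =
      ∑ s ∈ Finset.range t,
        lE π ⟨(μ s : Fin n → ℝ), hr s⟩ ⟨(μ (s+1) : Fin n → ℝ), hr (s+1)⟩ := by
  induction t with
  | zero => simp [pVE, relV]
  | succ t ih =>
    have hS : Sfun π (⟨(μ t : Fin n → ℝ), hr t⟩, ⟨(μ (t+1) : Fin n → ℝ), hr (t+1)⟩) =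
        ∑ i, (π ⟨(μ t : Fin n → ℝ), hr t⟩ : Fin n → ℝ) i *
          ((μ (t+1) : Fin n → ℝ) i / (μ t : Fin n → ℝ) i) := rfl
    have hSpos : (0:ℝ) < ∑ i, (π ⟨(μ t : Fin n → ℝ), hr t⟩ : Fin n → ℝ) i *
        ((μ (t+1) : Fin n → ℝ) i / (μ t : Fin n → ℝ) i) := by
      rw [← hS]; exact lt_of_lt_of_le hc (hSb π _).1
    have hrec : pVE μ hr π (t+1) = pVE μ hr π t *
        ∑ i, (π ⟨(μ t : Fin n → ℝ), hr t⟩ : Fin n → ℝ) i *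
          ((μ (t+1) : Fin n → ℝ) i / (μ t : Fin n → ℝ) i) := rfl
    refine ⟨by rw [hrec]; exact mul_pos ih.1 hSpos, ?_⟩
    rw [hrec, Real.log_mul (ne_of_gt ih.1) (ne_of_gt hSpos), ih.2,
      Finset.sum_range_succ]
    rfl

lemma sum_path_eq_count {β : Type*} [Fintype β] [DecidableEq β]
    (xs : ℕ → β) (f : β → ℝ) (t : ℕ) :
    ∑ s ∈ Finset.range t, f (xs s) =
      ∑ x : β, (∑ s ∈ Finset.range t, if xs s = x then (1:ℝ) else 0) * f x := by
  have key : ∀ x : β, (∑ s ∈ Finset.range t, if xs s = x then (1:ℝ) else 0) * f x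
      = ∑ s ∈ Finset.range t, if xs s = x then f x else 0 := by
    intro x; rw [Finset.sum_mul]; congr 1; ext s
    by_cases h : xs s = x <;> simp [h]
  simp_rw [key]
  rw [Finset.sum_comm]
  congr 1; ext s
  simp

lemma unif_conv {β : Type*} [Fintype β] (cnt : ℕ → β → ℝ) (P : β → ℝ)
    (hcnt : ∀ x, Tendsto (fun t : ℕ => cnt t x / t) atTop (𝓝 (P x)))
    (Cb : ℝ) (hCb : 0 ≤ Cb) {ε : ℝ} (hε : 0 < ε) :
    ∀ᶠ t : ℕ in atTop, ∀ g : β → ℝ, (∀ x, |g x| ≤ Cb) →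
      |∑ x : β, cnt t x * g x - t * ∑ x : β, P x * g x| ≤ ε * t := by
  set m : ℝ := (Fintype.card β : ℝ)
  have hm : 0 ≤ m := Nat.cast_nonneg _
  set δ : ℝ := ε / (m * Cb + 1) with hδdef
  have hδ : 0 < δ := div_pos hε (by positivity)
  have h1 : ∀ᶠ t : ℕ in atTop, ∀ x : β, |cnt t x / t - P x| ≤ δ := by
    rw [Filter.eventually_all]
    intro x
    have h0 : Tendsto (fun t : ℕ => cnt t x / t - P x) atTop (𝓝 0) := by
      simpa using (hcnt x).sub_const (P x)
    obtain ⟨N, hN⟩ := (Metric.tendsto_atTop.1 h0) δ hδ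
    refine eventually_atTop.2 ⟨N, fun t ht => ?_⟩
    have := hN t ht
    rw [Real.dist_eq, sub_zero] at this
    exact le_of_lt this
  filter_upwards [h1, eventually_ge_atTop 1] with t ht ht1 g hg
  have htpos : (0:ℝ) < t := by exact_mod_cast ht1
  have key : ∀ x : β, |cnt t x * g x - t * (P x * g x)| ≤ δ * Cb * t := by
    intro x
    have heq : cnt t x * g x - t * (P x * g x) = (cnt t x / t - P x) * g x * t := by
      field_simp
    rw [heq, abs_mul, abs_mul, abs_of_pos htpos]
    have h2 : |cnt t x / t - P x| * |g x| ≤ δ * Cb :=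
      mul_le_mul (ht x) (hg x) (abs_nonneg _) (le_of_lt hδ)
    exact mul_le_mul_of_nonneg_right h2 (le_of_lt htpos)
  calc |∑ x : β, cnt t x * g x - t * ∑ x : β, P x * g x|
      = |∑ x : β, (cnt t x * g x - t * (P x * g x))| := by
        rw [Finset.sum_sub_distrib, Finset.mul_sum]
    _ ≤ ∑ x : β, |cnt t x * g x - t * (P x * g x)| := Finset.abs_sum_le_sum_abs _ _
    _ ≤ ∑ _x : β, δ * Cb * t := Finset.sum_le_sum (fun x _ => key x)
    _ = m * (δ * Cb * t) := by rw [Finset.sum_const, nsmul_eq_mul]; rfl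
    _ ≤ ε * t := by
        have hkey : m * (δ * Cb) ≤ ε := by
          rw [hδdef, div_mul_eq_mul_div, mul_div_assoc', div_le_iff₀ (by positivity)]
          nlinarith
        nlinarith

lemma ereal_le_of_forall_eps {x : EReal} {d : ℝ}
    (h : ∀ ε : ℝ, 0 < ε → x ≤ ((d + ε : ℝ) : EReal)) : x ≤ (d : EReal) := by
  by_contra hc
  push_neg at hc
  obtain ⟨z, hz1, hz2⟩ := EReal.exists_between_coe_real hc
  have hε : 0 < z - d := by
    have h2 := EReal.coe_lt_coe_iff.1 hz1
    linarith
  have := h (z - d) hε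
  rw [show d + (z - d) = z by ring] at this
  exact absurd (lt_of_le_of_lt this hz2) (lt_irrefl x)

lemma ereal_ge_of_forall_eps {x : EReal} {d : ℝ}
    (h : ∀ ε : ℝ, 0 < ε → ((d - ε : ℝ) : EReal) ≤ x) : (d : EReal) ≤ x := by
  by_contra hc
  push_neg at hc
  obtain ⟨z, hz1, hz2⟩ := EReal.exists_between_coe_real hc
  have hz2' := EReal.coe_lt_coe_iff.1 hz2
  have hε : 0 < d - z := by linarith
  have := h (d - z) hε
  rw [show d - (d - z) = z by ring] at this
  exact absurd (lt_of_lt_of_le hz1 this) (lt_irrefl x)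

lemma limsup_le_of_le_coe {a : ℕ → EReal} {g : ℕ → ℝ} {L : ℝ}
    (h : ∀ᶠ t : ℕ in atTop, a t ≤ ((g t : ℝ) : EReal))
    (hg : Tendsto g atTop (𝓝 L)) : limsup a atTop ≤ (L : EReal) := by
  have h2 : Tendsto (fun t => ((g t : ℝ) : EReal)) atTop (𝓝 (L : EReal)) :=
    EReal.tendsto_coe.2 hg
  calc limsup a atTop ≤ limsup (fun t => ((g t : ℝ) : EReal)) atTop :=
        limsup_le_limsup h
    _ = (L : EReal) := h2.limsup_eq

lemma le_liminf_of_coe_le {a : ℕ → EReal} {g : ℕ → ℝ} {L : ℝ}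
    (h : ∀ᶠ t : ℕ in atTop, ((g t : ℝ) : EReal) ≤ a t)
    (hg : Tendsto g atTop (𝓝 L)) : (L : EReal) ≤ liminf a atTop := by
  have h2 : Tendsto (fun t => ((g t : ℝ) : EReal)) atTop (𝓝 (L : EReal)) :=
    EReal.tendsto_coe.2 hg
  calc (L : EReal) = liminf (fun t => ((g t : ℝ) : EReal)) atTop := h2.liminf_eq.symm
    _ ≤ liminf a atTop := liminf_le_liminf h

lemma aux_tendsto (K d : ℝ) :
    Tendsto (fun t : ℕ => (t:ℝ)⁻¹ * (K + t * d)) atTop (𝓝 d) := by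
  have h1 : Tendsto (fun t : ℕ => K / t + d) atTop (𝓝 (0 + d)) :=
    (tendsto_const_div_atTop_nhds_zero_nat K).add_const d
  rw [zero_add] at h1
  refine h1.congr' ?_
  filter_upwards [eventually_ge_atTop 1] with t ht
  have ht0 : (t:ℝ) ≠ 0 := by
    have : (1:ℝ) ≤ t := by exact_mod_cast ht
    linarith
  field_simp

set_option maxHeartbeats 2000000 in
/-- Theorem 3.3(ii): finite state space LDP for the wealth distributions,
with the convex rate function `I(π) = W* − W(π)`, `W(π) = ∫ ℓ_π dℙ`. -/
theorem stmt8 {n : ℕ} (hn : 2 ≤ n) (M : ℝ) (hM : 0 < M)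
    (E : Finset (Fin n → ℝ)) (hE : ∀ p ∈ E, p ∈ oS n)
    (μ : ℕ → ↥(oS n)) (hAM : AssumptionM M μ) (hr : ∀ t, (μ t : Fin n → ℝ) ∈ E)
    (P : ↥E × ↥E → ℝ) (hP0 : ∀ x, 0 ≤ P x) (hP1 : ∑ x : ↥E × ↥E, P x = 1)
    (hweak : ∀ x : ↥E × ↥E,
      Tendsto (fun t : ℕ =>
          (∑ s ∈ Finset.range t,
            if (⟨(μ s : Fin n → ℝ), hr s⟩ : ↥E) = x.1 ∧
               (⟨(μ (s + 1) : Fin n → ℝ), hr (s + 1)⟩ : ↥E) = x.2 then (1 : ℝ) else 0) / t)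
        atTop (𝓝 (P x)))
    (ν0 : Measure (↥E → ↥(cS n))) [IsProbabilityMeasure ν0]
    (hsupp : ∀ U : Set (↥E → ↥(cS n)), IsOpen U → U.Nonempty → 0 < ν0 U)
    (W : (↥E → ↥(cS n)) → ℝ) (hWdef : ∀ π, W π = ∑ x : ↥E × ↥E, P x * lE π x.1 x.2)
    (I : (↥E → ↥(cS n)) → ℝ) (hIdef : ∀ π, I π = (⨆ η : ↥E → ↥(cS n), W η) - W π) :
    (∀ F : Set (↥E → ↥(cS n)), IsClosed F →
      limsup (fun t : ℕ =>
          (((t : ℝ)⁻¹ : ℝ) : EReal) *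
            ENNReal.log (wd ν0 (fun π => pVE μ hr π t) F)) atTop
        ≤ -(⨅ π ∈ F, ((I π : ℝ) : EReal))) ∧
    (∀ G : Set (↥E → ↥(cS n)), IsOpen G →
      -(⨅ π ∈ G, ((I π : ℝ) : EReal)) ≤
        liminf (fun t : ℕ =>
          (((t : ℝ)⁻¹ : ℝ) : EReal) *
            ENNReal.log (wd ν0 (fun π => pVE μ hr π t) G)) atTop) ∧
    (∀ π η : ↥E → ↥(cS n), ∀ a b : ℝ, 0 ≤ a → 0 ≤ b → a + b = 1 →
      ∀ ψ : ↥E → ↥(cS n),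
        (∀ p : ↥E, (ψ p : Fin n → ℝ) = a • (π p : Fin n → ℝ) + b • (η p : Fin n → ℝ)) →
        I ψ ≤ a * I π + b * I η) := by
  classical
  have hne : Nonempty ↥E := ⟨⟨(μ 0 : Fin n → ℝ), hr 0⟩⟩
  obtain ⟨c, C, hc, hSb⟩ := exists_bounds hn hE hne
  have hSpos : ∀ (π : (↥E → ↥(cS n))) (x : ↥E × ↥E), 0 < Sfun π x :=
    fun π x => lt_of_lt_of_le hc (hSb π x).1
  -- uniform bound on lE
  set Cb : ℝ := max |Real.log c| |Real.log C| with hCbdef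
  have hCb : 0 ≤ Cb := le_trans (abs_nonneg _) (le_max_left _ _)
  have hlE_bound : ∀ (π : (↥E → ↥(cS n))) (x : ↥E × ↥E), |lE π x.1 x.2| ≤ Cb := by
    intro π x
    rw [lE_eq]
    have hlog1 : Real.log c ≤ Real.log (Sfun π x) :=
      Real.log_le_log hc (hSb π x).1
    have hlog2 : Real.log (Sfun π x) ≤ Real.log C :=
      Real.log_le_log (hSpos π x) (hSb π x).2
    rw [abs_le]
    constructor
    · have : -|Real.log c| ≤ Real.log c := neg_abs_le _
      have h2 : -Cb ≤ -|Real.log c| := neg_le_neg (le_max_left _ _)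
      linarith
    · have : Real.log C ≤ |Real.log C| := le_abs_self _
      have h2 : |Real.log C| ≤ Cb := le_max_right _ _
      linarith
  -- positivity of pVE
  have hVpos : ∀ (π : (↥E → ↥(cS n))) (t : ℕ), 0 < pVE μ hr π t :=
    fun π t => (pVE_pos_log hc hSb μ hr π t).1
  -- counting function
  set xs : ℕ → ↥E × ↥E := fun s =>
    (⟨(μ s : Fin n → ℝ), hr s⟩, ⟨(μ (s+1) : Fin n → ℝ), hr (s+1)⟩) with hxsdef
  set cnt : ℕ → ↥E × ↥E → ℝ := fun t x =>
    ∑ s ∈ Finset.range t,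
      if (⟨(μ s : Fin n → ℝ), hr s⟩ : ↥E) = x.1 ∧
         (⟨(μ (s + 1) : Fin n → ℝ), hr (s + 1)⟩ : ↥E) = x.2 then (1 : ℝ) else 0
    with hcntdef
  have hcnt_eq : ∀ t x, cnt t x =
      ∑ s ∈ Finset.range t, if xs s = x then (1:ℝ) else 0 := by
    intro t x
    refine Finset.sum_congr rfl fun s _ => ?_
    have hiff : ((⟨(μ s : Fin n → ℝ), hr s⟩ : ↥E) = x.1 ∧
        (⟨(μ (s + 1) : Fin n → ℝ), hr (s + 1)⟩ : ↥E) = x.2) ↔ xs s = x := by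
      rw [hxsdef]; constructor
      · rintro ⟨h1, h2⟩; exact Prod.ext h1 h2
      · intro h; exact ⟨congrArg Prod.fst h, congrArg Prod.snd h⟩
    exact if_congr hiff rfl rfl
  -- log of pVE as weighted sum of counts
  have hlogV : ∀ (π : (↥E → ↥(cS n))) (t : ℕ), Real.log (pVE μ hr π t) =
      ∑ x : ↥E × ↥E, cnt t x * lE π x.1 x.2 := by
    intro π t
    rw [(pVE_pos_log hc hSb μ hr π t).2]
    have := sum_path_eq_count xs (fun x => lE π x.1 x.2) t
    simp only [hxsdef] at this
    rw [this]
    refine Finset.sum_congr rfl fun x _ => ?_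
    rw [hcnt_eq]
  -- uniform convergence of (1/t) log V to W
  have hU : ∀ ε : ℝ, 0 < ε → ∀ᶠ t : ℕ in atTop, ∀ π : (↥E → ↥(cS n)),
      |Real.log (pVE μ hr π t) - t * W π| ≤ ε * t := by
    intro ε hε
    have := unif_conv cnt P hweak Cb hCb hε
    filter_upwards [this] with t ht π
    rw [hlogV, hWdef]
    exact ht (fun x => lE π x.1 x.2) (fun x => hlE_bound π x)
  -- exponential bounds on pVE
  have hVbd : ∀ ε : ℝ, 0 < ε → ∀ᶠ t : ℕ in atTop, ∀ π : (↥E → ↥(cS n)),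
      Real.exp (t * (W π - ε)) ≤ pVE μ hr π t ∧
      pVE μ hr π t ≤ Real.exp (t * (W π + ε)) := by
    intro ε hε
    filter_upwards [hU ε hε] with t ht π
    have h1 := ht π
    rw [abs_le] at h1
    have hexp : pVE μ hr π t = Real.exp (Real.log (pVE μ hr π t)) :=
      (Real.exp_log (hVpos π t)).symm
    constructor
    · rw [hexp]
      apply Real.exp_le_exp.2
      nlinarith [h1.1]
    · rw [hexp]
      apply Real.exp_le_exp.2
      nlinarith [h1.2]
  -- continuity
  have hScont : ∀ x : ↥E × ↥E, Continuous fun π : (↥E → ↥(cS n)) => Sfun π x := by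
    intro x
    refine continuous_finset_sum _ fun i _ => ?_
    exact ((continuous_apply i).comp
      (continuous_subtype_val.comp (continuous_apply (A := fun _ : ↥E => ↥(cS n)) x.1))).mul continuous_const
  have hWcont : Continuous W := by
    have hWeq : W = fun π : (↥E → ↥(cS n)) => ∑ x : ↥E × ↥E, P x * Real.log (Sfun π x) := by
      funext π; rw [hWdef]; simp only [lE_eq]
    rw [hWeq]
    exact continuous_finset_sum _ fun x _ =>
      continuous_const.mul ((hScont x).log (fun π => ne_of_gt (hSpos π x)))
  have hVcont : ∀ t : ℕ, Continuous fun π : (↥E → ↥(cS n)) => pVE μ hr π t := by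
    intro t
    induction t with
    | zero => exact continuous_const
    | succ t ih =>
      have h2 : Continuous fun π : (↥E → ↥(cS n)) =>
          ∑ i, (π ⟨(μ t : Fin n → ℝ), hr t⟩ : Fin n → ℝ) i *
            ((μ (t+1) : Fin n → ℝ) i / (μ t : Fin n → ℝ) i) := by
        refine continuous_finset_sum _ fun i _ => ?_
        exact ((continuous_apply i).comp
          (continuous_subtype_val.comp (continuous_apply (A := fun _ : ↥E => ↥(cS n)) _))).mul continuous_const
      exact ih.mul h2
  have hfmeas : ∀ t : ℕ, Measurable fun π : (↥E → ↥(cS n)) => ENNReal.ofReal (pVE μ hr π t) :=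
    fun t => (hVcont t).measurable.ennreal_ofReal
  -- the un-normalized integrals
  set N : ℕ → Set (↥E → ↥(cS n)) → ℝ≥0∞ :=
    fun t B => ∫⁻ π in B, ENNReal.ofReal (pVE μ hr π t) ∂ν0 with hNdef
  have hwd : ∀ (t : ℕ) (B : Set (↥E → ↥(cS n))), MeasurableSet B →
      wd ν0 (fun π => pVE μ hr π t) B = (N t Set.univ)⁻¹ * N t B := by
    intro t B hB
    simp only [wd, Measure.smul_apply, smul_eq_mul, hNdef,
      withDensity_apply _ hB, withDensity_apply _ MeasurableSet.univ]
  have hNup : ∀ (t : ℕ) (B : Set (↥E → ↥(cS n))) (b : ℝ), (∀ π ∈ B, pVE μ hr π t ≤ b) →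
      N t B ≤ ENNReal.ofReal b * ν0 B := by
    intro t B b hbd
    calc N t B ≤ ∫⁻ _π in B, ENNReal.ofReal b ∂ν0 :=
          setLIntegral_mono measurable_const
            (fun π hπ => ENNReal.ofReal_le_ofReal (hbd π hπ))
      _ = ENNReal.ofReal b * ν0 B := setLIntegral_const B _
  have hNlow : ∀ (t : ℕ) (U : Set (↥E → ↥(cS n))) (a : ℝ), (∀ π ∈ U, a ≤ pVE μ hr π t) →
      ENNReal.ofReal a * ν0 U ≤ N t U := by
    intro t U a hbd
    calc ENNReal.ofReal a * ν0 U = ∫⁻ _π in U, ENNReal.ofReal a ∂ν0 :=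
          (setLIntegral_const U _).symm
      _ ≤ N t U := setLIntegral_mono (hfmeas t)
          (fun π hπ => ENNReal.ofReal_le_ofReal (hbd π hπ))
  have hNmono : ∀ (t : ℕ) (U B : Set (↥E → ↥(cS n))), U ⊆ B → N t U ≤ N t B :=
    fun t U B hUB => lintegral_mono_set hUB
  -- maximizer of W
  have hTne : Nonempty (↥E → ↥(cS n)) := by
    have hcSne : Nonempty ↥(cS n) := by
      refine ⟨⟨fun _ => (n:ℝ)⁻¹, fun i => by positivity, ?_⟩⟩
      have hn0 : (n:ℝ) ≠ 0 := by positivity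
      simp [Finset.sum_const]
      rw [mul_inv_cancel₀ hn0]
    exact ⟨fun _ => Classical.arbitrary _⟩
  obtain ⟨πs, -, hπs⟩ := isCompact_univ.exists_isMaxOn (Set.univ_nonempty)
    hWcont.continuousOn
  have hπs' : ∀ η : (↥E → ↥(cS n)), W η ≤ W πs := fun η => hπs (Set.mem_univ η)
  have hWsup : (⨆ η : (↥E → ↥(cS n)), W η) = W πs := by
    apply le_antisymm
    · exact ciSup_le hπs'
    · exact le_ciSup ⟨W πs, by rintro y ⟨η, rfl⟩; exact hπs' η⟩ πs
  set Ws : ℝ := W πs with hWsdef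
  have hIdef' : ∀ π : (↥E → ↥(cS n)), I π = Ws - W π := by
    intro π; rw [hIdef, hWsup]
  -- the sequence in question
  set seq : Set (↥E → ↥(cS n)) → ℕ → EReal := fun B t =>
    (((t : ℝ)⁻¹ : ℝ) : EReal) *
      ENNReal.log (wd ν0 (fun π => pVE μ hr π t) B) with hseqdef
  -- CORE upper estimate: for measurable B with W ≤ L on B, limsup seq B ≤ L - Ws
  have core_upper : ∀ (B : Set (↥E → ↥(cS n))), MeasurableSet B → ∀ L : ℝ,
      (∀ π ∈ B, W π ≤ L) → limsup (seq B) atTop ≤ ((L - Ws : ℝ) : EReal) := by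
    intro B hB L hL
    apply ereal_le_of_forall_eps
    intro ε hε
    have hε3 : 0 < ε / 3 := by linarith
    -- the good open set near the maximizer
    set U : Set (↥E → ↥(cS n)) := W ⁻¹' Set.Ioi (Ws - ε / 3) with hUdef
    have hUopen : IsOpen U := (isOpen_Ioi).preimage hWcont
    have hUne : U.Nonempty := ⟨πs, by simp [hUdef, hWsdef]; linarith⟩
    have hUpos : 0 < ν0 U := hsupp U hUopen hUne
    set K : ℝ := (ν0 U).toReal with hKdef
    have hK : 0 < K := ENNReal.toReal_pos (ne_of_gt hUpos) (measure_ne_top _ _)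
    have hν0U : ν0 U = ENNReal.ofReal K := (ENNReal.ofReal_toReal (measure_ne_top _ _)).symm
    -- eventual bound
    have hmain : ∀ᶠ t : ℕ in atTop, seq B t ≤
        (((t:ℝ)⁻¹ * (-Real.log K + t * (L - Ws + ε)) : ℝ) : EReal) := by
      filter_upwards [hVbd (ε/3) hε3, eventually_ge_atTop 1] with t hVb ht1
      have htpos : (0:ℝ) < t := by exact_mod_cast ht1
      -- numerator bound
      have hnum : N t B ≤ ENNReal.ofReal (Real.exp (t * (L + ε/3))) := by
        calc N t B ≤ ENNReal.ofReal (Real.exp (t * (L + ε/3))) * ν0 B := by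
              apply hNup
              intro π hπ
              calc pVE μ hr π t ≤ Real.exp (t * (W π + ε/3)) := (hVb π).2
                _ ≤ Real.exp (t * (L + ε/3)) := by
                    apply Real.exp_le_exp.2
                    have := hL π hπ
                    nlinarith
          _ ≤ ENNReal.ofReal (Real.exp (t * (L + ε/3))) * 1 :=
              mul_le_mul_right prob_le_one _
          _ = ENNReal.ofReal (Real.exp (t * (L + ε/3))) := mul_one _
      -- denominator bound
      have hden : ENNReal.ofReal (Real.exp (t * (Ws - 2 * (ε/3))) * K) ≤ N t Set.univ := by
        calc ENNReal.ofReal (Real.exp (t * (Ws - 2 * (ε/3))) * K)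
            = ENNReal.ofReal (Real.exp (t * (Ws - 2 * (ε/3)))) * ν0 U := by
              rw [hν0U, ENNReal.ofReal_mul (le_of_lt (Real.exp_pos _))]
          _ ≤ N t U := by
              apply hNlow
              intro π hπ
              have hπU : Ws - ε/3 < W π := hπ
              calc Real.exp (t * (Ws - 2 * (ε/3))) ≤ Real.exp (t * (W π - ε/3)) := by
                    apply Real.exp_le_exp.2
                    nlinarith
                _ ≤ pVE μ hr π t := (hVb π).1
          _ ≤ N t Set.univ := hNmono t U Set.univ (Set.subset_univ U)
      -- combine
      set aa : ℝ := Real.exp (t * (Ws - 2 * (ε/3))) * K with haadef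
      set bb : ℝ := Real.exp (t * (L + ε/3)) with hbbdef
      have haapos : 0 < aa := mul_pos (Real.exp_pos _) hK
      have hbbpos : 0 < bb := Real.exp_pos _
      have hcomb : wd ν0 (fun π => pVE μ hr π t) B ≤ ENNReal.ofReal (bb / aa) := by
        rw [hwd t B hB]
        calc (N t Set.univ)⁻¹ * N t B
            ≤ (ENNReal.ofReal aa)⁻¹ * ENNReal.ofReal bb :=
              mul_le_mul' (ENNReal.inv_le_inv.2 hden) hnum
          _ = ENNReal.ofReal (bb / aa) := by
              rw [ENNReal.ofReal_div_of_pos haapos, div_eq_mul_inv, mul_comm]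
      have hlog : ENNReal.log (wd ν0 (fun π => pVE μ hr π t) B) ≤
          ((Real.log (bb / aa) : ℝ) : EReal) := by
        calc ENNReal.log (wd ν0 (fun π => pVE μ hr π t) B)
            ≤ ENNReal.log (ENNReal.ofReal (bb / aa)) := ENNReal.log_monotone hcomb
          _ = ((Real.log (bb / aa) : ℝ) : EReal) := by
              rw [ENNReal.log_ofReal, if_neg (not_le.2 (div_pos hbbpos haapos))]
      have hlogeq : Real.log (bb / aa) =
          -Real.log K + t * (L - Ws + ε) := by
        rw [Real.log_div (ne_of_gt hbbpos) (ne_of_gt haapos), hbbdef, haadef,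
          Real.log_mul (ne_of_gt (Real.exp_pos _)) (ne_of_gt hK),
          Real.log_exp, Real.log_exp]
        ring
      calc seq B t = (((t:ℝ)⁻¹ : ℝ) : EReal) *
            ENNReal.log (wd ν0 (fun π => pVE μ hr π t) B) := rfl
        _ ≤ (((t:ℝ)⁻¹ : ℝ) : EReal) * ((Real.log (bb / aa) : ℝ) : EReal) :=
            mul_le_mul_of_nonneg_left hlog
              (by exact_mod_cast inv_nonneg.2 (le_of_lt htpos))
        _ = (((t:ℝ)⁻¹ * (-Real.log K + t * (L - Ws + ε)) : ℝ) : EReal) := by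
            rw [← EReal.coe_mul, hlogeq]
      ;
    have hlim := limsup_le_of_le_coe hmain (aux_tendsto (-Real.log K) (L - Ws + ε))
    exact hlim
  -- CORE lower estimate: for open G and π0 ∈ G, W π0 - Ws ≤ liminf seq G
  have core_lower : ∀ (G : Set (↥E → ↥(cS n))), IsOpen G → ∀ π0 ∈ G,
      ((W π0 - Ws : ℝ) : EReal) ≤ liminf (seq G) atTop := by
    intro G hG π0 hπ0
    apply ereal_ge_of_forall_eps
    intro ε hε
    have hε3 : 0 < ε / 3 := by linarith
    set U : Set (↥E → ↥(cS n)) := G ∩ W ⁻¹' Set.Ioi (W π0 - ε / 3) with hUdef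
    have hUopen : IsOpen U := hG.inter ((isOpen_Ioi).preimage hWcont)
    have hUne : U.Nonempty := ⟨π0, hπ0, by simp; linarith⟩
    have hUpos : 0 < ν0 U := hsupp U hUopen hUne
    set K : ℝ := (ν0 U).toReal with hKdef
    have hK : 0 < K := ENNReal.toReal_pos (ne_of_gt hUpos) (measure_ne_top _ _)
    have hν0U : ν0 U = ENNReal.ofReal K := (ENNReal.ofReal_toReal (measure_ne_top _ _)).symm
    have hmain : ∀ᶠ t : ℕ in atTop,
        (((t:ℝ)⁻¹ * (Real.log K + t * (W π0 - Ws - ε)) : ℝ) : EReal) ≤ seq G t := by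
      filter_upwards [hVbd (ε/3) hε3, eventually_ge_atTop 1] with t hVb ht1
      have htpos : (0:ℝ) < t := by exact_mod_cast ht1
      -- numerator lower bound
      have hnum : ENNReal.ofReal (Real.exp (t * (W π0 - 2 * (ε/3))) * K) ≤ N t G := by
        calc ENNReal.ofReal (Real.exp (t * (W π0 - 2 * (ε/3))) * K)
            = ENNReal.ofReal (Real.exp (t * (W π0 - 2 * (ε/3)))) * ν0 U := by
              rw [hν0U, ENNReal.ofReal_mul (le_of_lt (Real.exp_pos _))]
          _ ≤ N t U := by
              apply hNlow
              intro π hπ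
              have hπU : W π0 - ε/3 < W π := hπ.2
              calc Real.exp (t * (W π0 - 2 * (ε/3))) ≤ Real.exp (t * (W π - ε/3)) := by
                    apply Real.exp_le_exp.2
                    nlinarith
                _ ≤ pVE μ hr π t := (hVb π).1
          _ ≤ N t G := hNmono t U G (Set.inter_subset_left)
      -- denominator upper bound
      have hden : N t Set.univ ≤ ENNReal.ofReal (Real.exp (t * (Ws + ε/3))) := by
        calc N t Set.univ ≤ ENNReal.ofReal (Real.exp (t * (Ws + ε/3))) * ν0 Set.univ := by
              apply hNup
              intro π _
              calc pVE μ hr π t ≤ Real.exp (t * (W π + ε/3)) := (hVb π).2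
                _ ≤ Real.exp (t * (Ws + ε/3)) := by
                    apply Real.exp_le_exp.2
                    have := hπs' π
                    nlinarith
          _ = ENNReal.ofReal (Real.exp (t * (Ws + ε/3))) := by
              rw [measure_univ, mul_one]
      set aa : ℝ := Real.exp (t * (Ws + ε/3)) with haadef
      set bb : ℝ := Real.exp (t * (W π0 - 2 * (ε/3))) * K with hbbdef
      have haapos : 0 < aa := Real.exp_pos _
      have hbbpos : 0 < bb := mul_pos (Real.exp_pos _) hK
      have hcomb : ENNReal.ofReal (bb / aa) ≤ wd ν0 (fun π => pVE μ hr π t) G := by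
        rw [hwd t G hG.measurableSet]
        calc ENNReal.ofReal (bb / aa)
            = (ENNReal.ofReal aa)⁻¹ * ENNReal.ofReal bb := by
              rw [ENNReal.ofReal_div_of_pos haapos, div_eq_mul_inv, mul_comm]
          _ ≤ (N t Set.univ)⁻¹ * N t G :=
              mul_le_mul' (ENNReal.inv_le_inv.2 hden) hnum
      have hlog : ((Real.log (bb / aa) : ℝ) : EReal) ≤
          ENNReal.log (wd ν0 (fun π => pVE μ hr π t) G) := by
        calc ((Real.log (bb / aa) : ℝ) : EReal)
            = ENNReal.log (ENNReal.ofReal (bb / aa)) := by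
              rw [ENNReal.log_ofReal, if_neg (not_le.2 (div_pos hbbpos haapos))]
          _ ≤ ENNReal.log (wd ν0 (fun π => pVE μ hr π t) G) := ENNReal.log_monotone hcomb
      have hlogeq : Real.log (bb / aa) =
          Real.log K + t * (W π0 - Ws - ε) := by
        rw [Real.log_div (ne_of_gt hbbpos) (ne_of_gt haapos), hbbdef, haadef,
          Real.log_mul (ne_of_gt (Real.exp_pos _)) (ne_of_gt hK),
          Real.log_exp, Real.log_exp]
        ring
      calc (((t:ℝ)⁻¹ * (Real.log K + t * (W π0 - Ws - ε)) : ℝ) : EReal)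
          = (((t:ℝ)⁻¹ : ℝ) : EReal) * ((Real.log (bb / aa) : ℝ) : EReal) := by
            rw [← EReal.coe_mul, hlogeq]
        _ ≤ (((t:ℝ)⁻¹ : ℝ) : EReal) *
            ENNReal.log (wd ν0 (fun π => pVE μ hr π t) G) :=
            mul_le_mul_of_nonneg_left hlog
              (by exact_mod_cast inv_nonneg.2 (le_of_lt htpos))
        _ = seq G t := rfl
      ;
    have hlim := le_liminf_of_coe_le hmain (aux_tendsto (Real.log K) (W π0 - Ws - ε))
    exact hlim
  refine ⟨?_, ?_, ?_⟩
  -- (1) upper bound for closed sets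
  · intro F hF
    rcases Set.eq_empty_or_nonempty F with hFe | hFne
    · subst hFe
      have hbot : ∀ᶠ t : ℕ in atTop, seq (∅ : Set (↥E → ↥(cS n))) t = ⊥ := by
        filter_upwards [eventually_ge_atTop 1] with t ht1
        have htpos : (0:ℝ) < (t:ℝ)⁻¹ := by
          have : (0:ℝ) < t := by exact_mod_cast ht1
          positivity
        show (((t : ℝ)⁻¹ : ℝ) : EReal) *
            ENNReal.log (wd ν0 (fun π => pVE μ hr π t) ∅) = ⊥
        rw [measure_empty, ENNReal.log_zero]
        exact EReal.mul_bot_of_pos (by exact_mod_cast htpos)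
      have : limsup (seq (∅ : Set (↥E → ↥(cS n)))) atTop = ⊥ := by
        rw [limsup_congr hbot]
        exact limsup_const ⊥
      rw [show (fun t : ℕ => (((t : ℝ)⁻¹ : ℝ) : EReal) *
            ENNReal.log (wd ν0 (fun π => pVE μ hr π t) ∅)) = seq (∅ : Set (↥E → ↥(cS n))) from rfl,
        this]
      exact bot_le
    · obtain ⟨πF, hπFmem, hπF⟩ := (hF.isCompact).exists_isMaxOn hFne hWcont.continuousOn
      have hinf : (⨅ π ∈ F, ((I π : ℝ) : EReal)) = ((I πF : ℝ) : EReal) := by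
        apply le_antisymm
        · exact iInf₂_le πF hπFmem
        · refine le_iInf₂ fun π hπ => ?_
          apply EReal.coe_le_coe_iff.2
          rw [hIdef' π, hIdef' πF]
          have hWle : W π ≤ W πF := hπF hπ
          linarith
      rw [hinf]
      have hneg : -((I πF : ℝ) : EReal) = ((W πF - Ws : ℝ) : EReal) := by
        rw [← EReal.coe_neg, hIdef' πF]
        norm_num
      rw [hneg]
      exact core_upper F hF.measurableSet (W πF) (fun π hπ => hπF hπ)
  -- (2) lower bound for open sets
  · intro G hG
    rw [EReal.neg_le]
    refine le_iInf₂ fun π0 hπ0 => ?_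
    rw [EReal.neg_le]
    have hneg : -((I π0 : ℝ) : EReal) = ((W π0 - Ws : ℝ) : EReal) := by
      rw [← EReal.coe_neg, hIdef' π0]
      norm_num
    rw [hneg]
    exact core_lower G hG π0 hπ0
  -- (3) convexity of the rate function
  · intro π η a b ha hb hab ψ hψ
    have hconc : ∀ x : ↥E × ↥E,
        a * lE π x.1 x.2 + b * lE η x.1 x.2 ≤ lE ψ x.1 x.2 := by
      intro x
      have hSψ : Sfun ψ x = a * Sfun π x + b * Sfun η x := by
        simp only [Sfun]
        rw [Finset.mul_sum, Finset.mul_sum, ← Finset.sum_add_distrib]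
        refine Finset.sum_congr rfl fun i _ => ?_
        rw [hψ x.1]
        simp only [Pi.add_apply, Pi.smul_apply, smul_eq_mul]
        ring
      have h1 : Sfun π x ∈ Set.Ioi (0:ℝ) := hSpos π x
      have h2 : Sfun η x ∈ Set.Ioi (0:ℝ) := hSpos η x
      have := (strictConcaveOn_log_Ioi.concaveOn).2 h1 h2 ha hb hab
      simp only [smul_eq_mul] at this
      rw [lE_eq, lE_eq, lE_eq, hSψ]
      exact this
    have hWconc : a * W π + b * W η ≤ W ψ := by
      rw [hWdef, hWdef, hWdef, Finset.mul_sum, Finset.mul_sum,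
        ← Finset.sum_add_distrib]
      refine Finset.sum_le_sum fun x _ => ?_
      have h1 := hconc x
      have h2 := hP0 x
      nlinarith
    rw [hIdef' ψ, hIdef' π, hIdef' η]
    have hs : a * Ws + b * Ws = Ws := by rw [← add_mul, hab, one_mul]
    nlinarith
end
end

section
/- Suppose the market weight sequence {μ(t)} ⊂ Δ_n satisfies Assumption (M). Let Θ be a totally bounded subset of L^∞(Δ_n, Δ̄_n) (portfolio maps with the supremum metric), jointly measurable, and let ν_0 be an initial distribution on Θ with full support. Then Cover's portfolio π̂(t) = ∫_Θ π(μ(t)) dν_t(π) satisfies the universality property lim_{t→∞} (1/t) log ( V̂(t)/V*(t) ) = 0, where V̂(t) = ∫_Θ V_π(t) dν_0(π) and V*(t) = sup_{π ∈ Θ} V_π(t). -/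
open MeasureTheory Filter Topology Finset
open scoped UniformConvergence ENNReal Uniformity

noncomputable section

lemma pV_succ {n : ℕ} (μ : ℕ → ↥(oS n)) (π : ↥(oS n) → ↥(cS n)) (t : ℕ) :
    pV μ π (t + 1) = pV μ π t *
      ∑ i, (π (μ t) : Fin n → ℝ) i * ((μ (t + 1) : Fin n → ℝ) i / (μ t : Fin n → ℝ) i) := rfl

lemma sum_bds {n : ℕ} {M : ℝ} (hM : 0 < M) {μ : ℕ → ↥(oS n)} (hAM : AssumptionM M μ)
    (t : ℕ) (w : ↥(cS n)) :
    1 / M ≤ (∑ i, (w : Fin n → ℝ) i * ((μ (t + 1) : Fin n → ℝ) i / (μ t : Fin n → ℝ) i)) ∧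
      (∑ i, (w : Fin n → ℝ) i * ((μ (t + 1) : Fin n → ℝ) i / (μ t : Fin n → ℝ) i)) ≤ M := by
  obtain ⟨hw0, hw1⟩ := w.2
  constructor
  · calc 1 / M = ∑ i, (w : Fin n → ℝ) i * (1 / M) := by
          rw [← Finset.sum_mul, hw1, one_mul]
      _ ≤ _ := Finset.sum_le_sum fun i _ =>
          mul_le_mul_of_nonneg_left (hAM t i).1 (hw0 i)
  · calc (∑ i, (w : Fin n → ℝ) i * ((μ (t + 1) : Fin n → ℝ) i / (μ t : Fin n → ℝ) i))
        ≤ ∑ i, (w : Fin n → ℝ) i * M := Finset.sum_le_sum fun i _ =>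
          mul_le_mul_of_nonneg_left (hAM t i).2 (hw0 i)
      _ = M := by rw [← Finset.sum_mul, hw1, one_mul]

lemma pV_bounds {n : ℕ} {M : ℝ} (hM : 0 < M) {μ : ℕ → ↥(oS n)} (hAM : AssumptionM M μ)
    (π : ↥(oS n) → ↥(cS n)) (t : ℕ) :
    (1 / M) ^ t ≤ pV μ π t ∧ pV μ π t ≤ M ^ t := by
  have hM' : 0 < 1 / M := by positivity
  induction t with
  | zero => simp [pV, relV]
  | succ t ih =>
    obtain ⟨h1, h2⟩ := sum_bds hM hAM t (π (μ t))
    constructor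
    · rw [pV_succ, pow_succ]
      exact mul_le_mul ih.1 h1 hM'.le (le_trans (pow_nonneg hM'.le t) ih.1)
    · rw [pV_succ, pow_succ]
      exact mul_le_mul ih.2 h2 (le_trans hM'.le h1) (pow_nonneg hM.le t)

lemma pV_pos {n : ℕ} {M : ℝ} (hM : 0 < M) {μ : ℕ → ↥(oS n)} (hAM : AssumptionM M μ)
    (π : ↥(oS n) → ↥(cS n)) (t : ℕ) : 0 < pV μ π t :=
  lt_of_lt_of_le (by positivity) (pV_bounds hM hAM π t).1

lemma pV_compare {n : ℕ} {M : ℝ} (hM : 0 < M) {μ : ℕ → ↥(oS n)} (hAM : AssumptionM M μ)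
    {ε : ℝ} (hε : 0 ≤ ε) (hc : (n : ℝ) * ε * M ^ 2 ≤ 1)
    (π π' : ↥(oS n) → ↥(cS n))
    (h : ∀ p i, |(π' p : Fin n → ℝ) i - (π p : Fin n → ℝ) i| ≤ ε) (t : ℕ) :
    (1 - (n : ℝ) * ε * M ^ 2) ^ t * pV μ π t ≤ pV μ π' t := by
  set c : ℝ := (n : ℝ) * ε * M ^ 2 with hcdef
  have hc0 : 0 ≤ c := by positivity
  have hM' : 0 < 1 / M := by positivity
  induction t with
  | zero => simp [pV, relV]
  | succ t ih =>
    set S := ∑ i, (π (μ t) : Fin n → ℝ) i * ((μ (t + 1) : Fin n → ℝ) i / (μ t : Fin n → ℝ) i)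
    set S' := ∑ i, (π' (μ t) : Fin n → ℝ) i * ((μ (t + 1) : Fin n → ℝ) i / (μ t : Fin n → ℝ) i)
    have hS : 1 / M ≤ S := (sum_bds hM hAM t (π (μ t))).1
    have hstep : (1 - c) * S ≤ S' := by
      have h1 : S - S' ≤ (n : ℝ) * ε * M := by
        have : S - S' = ∑ i, ((π (μ t) : Fin n → ℝ) i - (π' (μ t) : Fin n → ℝ) i) *
            ((μ (t + 1) : Fin n → ℝ) i / (μ t : Fin n → ℝ) i) := by
          rw [← Finset.sum_sub_distrib]; congr 1; ext i; ring
        rw [this]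
        calc _ ≤ ∑ _i : Fin n, ε * M := Finset.sum_le_sum fun i _ => by
              have hr0 : 0 ≤ (μ (t + 1) : Fin n → ℝ) i / (μ t : Fin n → ℝ) i :=
                le_trans hM'.le (hAM t i).1
              calc ((π (μ t) : Fin n → ℝ) i - (π' (μ t) : Fin n → ℝ) i) *
                    ((μ (t + 1) : Fin n → ℝ) i / (μ t : Fin n → ℝ) i)
                  ≤ |(π (μ t) : Fin n → ℝ) i - (π' (μ t) : Fin n → ℝ) i| *
                    ((μ (t + 1) : Fin n → ℝ) i / (μ t : Fin n → ℝ) i) :=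
                    mul_le_mul_of_nonneg_right (le_abs_self _) hr0
                _ ≤ ε * M := by
                    refine mul_le_mul ?_ (hAM t i).2 hr0 hε
                    rw [abs_sub_comm]; exact h (μ t) i
          _ = (n : ℝ) * ε * M := by
              rw [Finset.sum_const, Finset.card_univ, Fintype.card_fin, nsmul_eq_mul]; ring
      have h2 : (n : ℝ) * ε * M ≤ c * S := by
        have : (n : ℝ) * ε * M = c * (1 / M) := by
          rw [hcdef]; field_simp
        rw [this]
        exact mul_le_mul_of_nonneg_left hS hc0
      linarith
    rw [pV_succ, pV_succ, pow_succ]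
    have hpos' : 0 ≤ pV μ π' t := (pV_pos hM hAM π' t).le
    calc (1 - c) ^ t * (1 - c) * (pV μ π t * S)
        = ((1 - c) ^ t * pV μ π t) * ((1 - c) * S) := by ring
      _ ≤ pV μ π' t * S' := by
          refine mul_le_mul ih hstep ?_ hpos'
          have : (0:ℝ) ≤ 1 - c := by linarith
          exact mul_nonneg this (le_trans hM'.le hS)

lemma pV_meas {n : ℕ} (μ : ℕ → ↥(oS n)) (Θ : Set (PMap n))
    (hmeas : Measurable fun pc : ↥(oS n) × ↥Θ => UniformFun.toFun pc.2.1 pc.1) (t : ℕ) :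
    Measurable fun θ : ↥Θ => pV μ (UniformFun.toFun θ.1) t := by
  have hθ : ∀ s : ℕ, Measurable fun θ : ↥Θ => Subtype.val (UniformFun.toFun θ.1 (μ s)) := by
    intro s
    have h1 : Measurable fun θ : ↥Θ => ((μ s, θ) : ↥(oS n) × ↥Θ) :=
      measurable_const.prodMk measurable_id
    exact measurable_subtype_coe.comp (hmeas.comp h1)
  induction t with
  | zero =>
    have : (fun θ : ↥Θ => pV μ (UniformFun.toFun θ.1) 0) = fun _ => (1:ℝ) := rfl
    rw [this]; exact measurable_const
  | succ t ih =>
    have : (fun θ : ↥Θ => pV μ (UniformFun.toFun θ.1) (t+1)) =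
        fun θ : ↥Θ => pV μ (UniformFun.toFun θ.1) t *
          ∑ i, Subtype.val (UniformFun.toFun θ.1 (μ t)) i *
            ((μ (t + 1) : Fin n → ℝ) i / (μ t : Fin n → ℝ) i) := rfl
    rw [this]
    refine ih.mul (Finset.measurable_sum _ fun i _ => ?_)
    exact ((measurable_pi_apply i).comp (hθ t)).mul measurable_const



/-- Lemma 3.5: universality of Cover's portfolio for a totally bounded
family of portfolio maps: `(1/t) log (V̂(t)/V*(t)) → 0`, where
`V̂(t) = ∫_Θ V_π(t) dν₀(π)` and `V*(t) = sup_{π ∈ Θ} V_π(t)`. -/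
theorem stmt9 {n : ℕ} (hn : 2 ≤ n) (M : ℝ) (hM : 0 < M)
    (μ : ℕ → ↥(oS n)) (hAM : AssumptionM M μ)
    (Θ : Set (PMap n)) (hTB : TotallyBounded Θ)
    (hmeas : Measurable fun pc : ↥(oS n) × ↥Θ => UniformFun.toFun pc.2.1 pc.1)
    (ν0 : Measure ↥Θ) [IsProbabilityMeasure ν0]
    (hsupp : ∀ U : Set ↥Θ, IsOpen U → U.Nonempty → 0 < ν0 U) :
    Tendsto (fun t : ℕ =>
        Real.log ((∫ θ : ↥Θ, pV μ (UniformFun.toFun θ.1) t ∂ν0) /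
          (⨆ θ : ↥Θ, pV μ (UniformFun.toFun θ.1) t)) / t)
      atTop (𝓝 0) := by
  classical
  have hNE : Nonempty ↥Θ := by
    by_contra h
    rw [not_nonempty_iff] at h
    have h1 : ν0 Set.univ = 1 := measure_univ
    rw [Set.univ_eq_empty_iff.mpr h, measure_empty] at h1
    exact zero_ne_one h1
  have hVmeas : ∀ t, Measurable fun θ : ↥Θ => pV μ (UniformFun.toFun θ.1) t := pV_meas μ Θ hmeas
  have hlb : ∀ (t : ℕ) (θ : ↥Θ), (1 / M) ^ t ≤ pV μ (UniformFun.toFun θ.1) t :=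
    fun t θ => (pV_bounds hM hAM _ t).1
  have hub : ∀ (t : ℕ) (θ : ↥Θ), pV μ (UniformFun.toFun θ.1) t ≤ M ^ t :=
    fun t θ => (pV_bounds hM hAM _ t).2
  have hBdd : ∀ t, BddAbove (Set.range fun θ : ↥Θ => pV μ (UniformFun.toFun θ.1) t) :=
    fun t => ⟨M ^ t, by rintro _ ⟨θ, rfl⟩; exact hub t θ⟩
  have hVs_pos : ∀ t, 0 < ⨆ θ : ↥Θ, pV μ (UniformFun.toFun θ.1) t := fun t =>
    lt_of_lt_of_le (by positivity) (le_trans (hlb t hNE.some) (le_ciSup (hBdd t) hNE.some))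
  have hInt : ∀ t, Integrable (fun θ : ↥Θ => pV μ (UniformFun.toFun θ.1) t) ν0 := by
    intro t
    refine (integrable_const (M ^ t)).mono' (hVmeas t).aestronglyMeasurable
      (ae_of_all _ fun θ => ?_)
    rw [Real.norm_eq_abs, abs_of_pos (pV_pos hM hAM _ t)]
    exact hub t θ
  have hVh_le : ∀ t, (∫ θ : ↥Θ, pV μ (UniformFun.toFun θ.1) t ∂ν0) ≤
      ⨆ θ : ↥Θ, pV μ (UniformFun.toFun θ.1) t := by
    intro t
    calc (∫ θ : ↥Θ, pV μ (UniformFun.toFun θ.1) t ∂ν0)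
        ≤ ∫ _θ : ↥Θ, (⨆ θ : ↥Θ, pV μ (UniformFun.toFun θ.1) t) ∂ν0 :=
          integral_mono (hInt t) (integrable_const _) fun θ => le_ciSup (hBdd t) θ
      _ = _ := by simp
  have hVh_pos : ∀ t, 0 < ∫ θ : ↥Θ, pV μ (UniformFun.toFun θ.1) t ∂ν0 := by
    intro t
    calc (0:ℝ) < (1 / M) ^ t := by positivity
      _ = ∫ _θ : ↥Θ, (1 / M) ^ t ∂ν0 := by simp
      _ ≤ _ := integral_mono (integrable_const _) (hInt t) fun θ => hlb t θ
  have hle0 : ∀ t, Real.log ((∫ θ : ↥Θ, pV μ (UniformFun.toFun θ.1) t ∂ν0) /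
      (⨆ θ : ↥Θ, pV μ (UniformFun.toFun θ.1) t)) ≤ 0 := fun t =>
    Real.log_nonpos (div_nonneg (hVh_pos t).le (hVs_pos t).le)
      ((div_le_one (hVs_pos t)).2 (hVh_le t))
  refine NormedAddCommGroup.tendsto_nhds_zero.mpr fun ε hε => ?_
  set δ : ℝ := 1 - Real.exp (-(ε / 4)) with hδdef
  have hδ0 : 0 < δ := by
    have : Real.exp (-(ε / 4)) < 1 := Real.exp_lt_one_iff.2 (by linarith)
    simp only [hδdef]; linarith
  have hδ1 : δ < 1 := by
    have := Real.exp_pos (-(ε / 4)); simp only [hδdef]; linarith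
  have h1δ : (0:ℝ) < 1 - δ := by linarith
  have hlog1δ : Real.log (1 - δ) = -(ε / 4) := by
    have h : (1:ℝ) - δ = Real.exp (-(ε / 4)) := by rw [hδdef]; ring
    rw [h, Real.log_exp]
  have hn0 : (0:ℝ) < n := by
    have : (0:ℕ) < n := by omega
    exact_mod_cast this
  set εb : ℝ := δ / (n * M ^ 2) with hεbdef
  have hεb : 0 < εb := by rw [hεbdef]; positivity
  have hcδ : (n:ℝ) * εb * M ^ 2 = δ := by
    rw [hεbdef]; field_simp
  set W : Set (↥(cS n) × ↥(cS n)) := {q | dist q.1 q.2 < εb / 2} with hWdef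
  have hW : W ∈ 𝓤 ↥(cS n) := Metric.dist_mem_uniformity (by positivity)
  set U : Set (PMap n × PMap n) := UniformFun.gen (↥(oS n)) (↥(cS n)) W with hUdef
  have hU : U ∈ 𝓤 (PMap n) := (UniformFun.hasBasis_uniformity _ _).mem_of_mem hW
  obtain ⟨F, hFΘ, hFfin, hFcov⟩ := totallyBounded_iff_subset.1 hTB U hU
  set A : PMap n → Set ↥Θ := fun g => Subtype.val ⁻¹' interior {x | (x, g) ∈ U} with hAdef
  have hAopen : ∀ g, IsOpen (A g) := fun g => isOpen_interior.preimage continuous_subtype_val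
  have hAmeas : ∀ g, MeasurableSet (A g) := fun g =>
    (isOpen_interior.measurableSet).preimage measurable_subtype_coe
  have hgball : ∀ g : PMap n, g ∈ interior {x | (x, g) ∈ U} := fun g =>
    mem_interior_iff_mem_nhds.2 (mem_nhds_right g hU)
  have hApos : ∀ g ∈ F, 0 < ν0 (A g) := fun g hg =>
    hsupp _ (hAopen g) ⟨⟨g, hFΘ hg⟩, hgball g⟩
  have hFne : F.Nonempty := by
    obtain ⟨θ0⟩ := hNE
    have h := hFcov θ0.2
    rw [Set.mem_iUnion₂] at h
    obtain ⟨g, hg, -⟩ := h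
    exact ⟨g, hg⟩
  have hFsne : hFfin.toFinset.Nonempty := by rwa [Set.Finite.toFinset_nonempty]
  set c : ℝ := hFfin.toFinset.inf' hFsne fun g => (ν0 (A g)).toReal with hcdef
  have hcpos : 0 < c := by
    rw [hcdef, Finset.lt_inf'_iff]
    intro g hg
    exact ENNReal.toReal_pos (hApos g (hFfin.mem_toFinset.1 hg)).ne' (measure_ne_top ν0 _)
  have hcle : ∀ g ∈ F, c ≤ (ν0 (A g)).toReal := fun g hg => by
    rw [hcdef]; exact Finset.inf'_le _ (hFfin.mem_toFinset.2 hg)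
  have hmain : ∀ t : ℕ, 1 ≤ t →
      Real.log (c / 2) / t + -(ε / 4) ≤
        Real.log ((∫ θ : ↥Θ, pV μ (UniformFun.toFun θ.1) t ∂ν0) /
          (⨆ θ : ↥Θ, pV μ (UniformFun.toFun θ.1) t)) / t := by
    intro t ht
    have ht' : (0:ℝ) < t := by exact_mod_cast ht
    have hVsp : 0 < ⨆ θ : ↥Θ, pV μ (UniformFun.toFun θ.1) t := hVs_pos t
    obtain ⟨θt, hθt⟩ := exists_lt_of_lt_ciSup
      (show (⨆ θ : ↥Θ, pV μ (UniformFun.toFun θ.1) t) / 2 <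
          ⨆ θ : ↥Θ, pV μ (UniformFun.toFun θ.1) t by linarith)
    have hcov := hFcov θt.2
    rw [Set.mem_iUnion₂] at hcov
    obtain ⟨g, hg, hθtball⟩ := hcov
    have key : ∀ θ' ∈ A g,
        (1 - δ) ^ t * ((⨆ θ : ↥Θ, pV μ (UniformFun.toFun θ.1) t) / 2) ≤
          pV μ (UniformFun.toFun θ'.1) t := by
      intro θ' hθ'
      have hθ'mem : θ'.1 ∈ interior {x | (x, g) ∈ U} := hθ'
      have hθ'ball : θ'.1 ∈ {x | (x, g) ∈ U} := interior_subset hθ'mem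
      have hcoord : ∀ (p : ↥(oS n)) (i : Fin n),
          |Subtype.val (UniformFun.toFun θ'.1 p) i - Subtype.val (UniformFun.toFun θt.1 p) i|
            ≤ εb := by
        intro p i
        have d1 : dist (UniformFun.toFun θ'.1 p) (UniformFun.toFun g p) < εb / 2 := hθ'ball p
        have d2 : dist (UniformFun.toFun θt.1 p) (UniformFun.toFun g p) < εb / 2 := hθtball p
        have d3 : dist (UniformFun.toFun θ'.1 p) (UniformFun.toFun θt.1 p) < εb := by
          calc dist (UniformFun.toFun θ'.1 p) (UniformFun.toFun θt.1 p)
              ≤ dist (UniformFun.toFun θ'.1 p) (UniformFun.toFun g p) +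
                dist (UniformFun.toFun g p) (UniformFun.toFun θt.1 p) := dist_triangle _ _ _
            _ = dist (UniformFun.toFun θ'.1 p) (UniformFun.toFun g p) +
                dist (UniformFun.toFun θt.1 p) (UniformFun.toFun g p) := by
                rw [dist_comm (UniformFun.toFun g p)]
            _ < εb := by linarith
        calc |Subtype.val (UniformFun.toFun θ'.1 p) i - Subtype.val (UniformFun.toFun θt.1 p) i|
            = dist (Subtype.val (UniformFun.toFun θ'.1 p) i)
                (Subtype.val (UniformFun.toFun θt.1 p) i) := (Real.dist_eq _ _).symm
          _ ≤ dist (Subtype.val (UniformFun.toFun θ'.1 p))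
                (Subtype.val (UniformFun.toFun θt.1 p)) := dist_le_pi_dist _ _ i
          _ = dist (UniformFun.toFun θ'.1 p) (UniformFun.toFun θt.1 p) :=
              (Subtype.dist_eq _ _).symm
          _ ≤ εb := d3.le
      have hcomp := pV_compare hM hAM hεb.le (by rw [hcδ]; exact hδ1.le)
        (UniformFun.toFun θt.1) (UniformFun.toFun θ'.1) hcoord t
      rw [hcδ] at hcomp
      calc (1 - δ) ^ t * ((⨆ θ : ↥Θ, pV μ (UniformFun.toFun θ.1) t) / 2)
          ≤ (1 - δ) ^ t * pV μ (UniformFun.toFun θt.1) t :=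
            mul_le_mul_of_nonneg_left hθt.le (pow_nonneg h1δ.le t)
        _ ≤ _ := hcomp
    have h1 : ((1 - δ) ^ t * ((⨆ θ : ↥Θ, pV μ (UniformFun.toFun θ.1) t) / 2)) *
        (ν0 (A g)).toReal ≤ ∫ θ in A g, pV μ (UniformFun.toFun θ.1) t ∂ν0 :=
      setIntegral_ge_of_const_le_real (hAmeas g) (measure_ne_top _ _) key (hInt t).integrableOn
    have h2 : (∫ θ in A g, pV μ (UniformFun.toFun θ.1) t ∂ν0) ≤
        ∫ θ : ↥Θ, pV μ (UniformFun.toFun θ.1) t ∂ν0 :=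
      setIntegral_le_integral (hInt t) (ae_of_all _ fun θ => (pV_pos hM hAM _ t).le)
    have hXnn : 0 ≤ (1 - δ) ^ t * ((⨆ θ : ↥Θ, pV μ (UniformFun.toFun θ.1) t) / 2) :=
      mul_nonneg (pow_nonneg h1δ.le t) (by linarith)
    have h3 : c / 2 * (1 - δ) ^ t * (⨆ θ : ↥Θ, pV μ (UniformFun.toFun θ.1) t) ≤
        ∫ θ : ↥Θ, pV μ (UniformFun.toFun θ.1) t ∂ν0 := by
      calc c / 2 * (1 - δ) ^ t * (⨆ θ : ↥Θ, pV μ (UniformFun.toFun θ.1) t)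
          = c * ((1 - δ) ^ t * ((⨆ θ : ↥Θ, pV μ (UniformFun.toFun θ.1) t) / 2)) := by ring
        _ ≤ (ν0 (A g)).toReal *
            ((1 - δ) ^ t * ((⨆ θ : ↥Θ, pV μ (UniformFun.toFun θ.1) t) / 2)) :=
            mul_le_mul_of_nonneg_right (hcle g hg) hXnn
        _ = ((1 - δ) ^ t * ((⨆ θ : ↥Θ, pV μ (UniformFun.toFun θ.1) t) / 2)) *
            (ν0 (A g)).toReal := by ring
        _ ≤ _ := le_trans h1 h2
    have hratio : c / 2 * (1 - δ) ^ t ≤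
        (∫ θ : ↥Θ, pV μ (UniformFun.toFun θ.1) t ∂ν0) /
          (⨆ θ : ↥Θ, pV μ (UniformFun.toFun θ.1) t) := by
      rw [le_div_iff₀ hVsp]
      exact h3
    have hlogmul := Real.log_le_log (mul_pos (by linarith) (pow_pos h1δ t)) hratio
    rw [Real.log_mul (by positivity) (ne_of_gt (pow_pos h1δ t)), Real.log_pow] at hlogmul
    rw [← hlog1δ]
    have hdiv : (Real.log (c / 2) + (t : ℝ) * Real.log (1 - δ)) / t ≤
        Real.log ((∫ θ : ↥Θ, pV μ (UniformFun.toFun θ.1) t ∂ν0) /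
          (⨆ θ : ↥Θ, pV μ (UniformFun.toFun θ.1) t)) / t := by
      gcongr
    rwa [add_div, mul_div_cancel_left₀ _ (ne_of_gt ht')] at hdiv
  have hK := NormedAddCommGroup.tendsto_nhds_zero.mp
    (tendsto_const_div_atTop_nhds_zero_nat (Real.log (c / 2))) (ε / 4) (by positivity)
  filter_upwards [hK, eventually_ge_atTop 1] with t h1 h2
  have hm := hmain t h2
  have hf0 : Real.log ((∫ θ : ↥Θ, pV μ (UniformFun.toFun θ.1) t ∂ν0) /
      (⨆ θ : ↥Θ, pV μ (UniformFun.toFun θ.1) t)) / t ≤ 0 :=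
    div_nonpos_of_nonpos_of_nonneg (hle0 t) (Nat.cast_nonneg t)
  rw [Real.norm_eq_abs, abs_of_nonpos hf0]
  rw [Real.norm_eq_abs] at h1
  have h1' := abs_lt.1 h1
  linarith [h1'.1, hm, hε]
end
end

section
/- Let n = 2, let E = {p ∈ Δ_2 : p_1, p_2 rational}, let Θ = (Δ̄_2)^E with the topology of pointwise convergence, and let ν_0 be the infinite product over E of the uniform distribution on Δ̄_2. Fix a rational δ > 0 and let the market weight path be μ(0) = (1/2, 1/2), μ(t+1) = ( μ_1(t)/(1 + δ μ_2(t)), (1+δ)μ_2(t)/(1 + δ μ_2(t)) ). Then Cover's portfolio satisfies V̂(t) = (μ_2(t)/μ_2(0)) · (1 − (1/2) δ/(1+δ))^t for all t, while V*(t) := sup_{π∈Θ} V_π(t) = μ_2(t)/μ_2(0) for t > 0; consequently lim_{t→∞} (1/t) log ( V̂(t)/V*(t) ) = log( 1 − (1/2) δ/(1+δ) ) < 0, so Cover's portfolio fails the universality property for this path even though the path satisfies Assumption (M) with M = 1 + δ. -/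
open scoped Classical

open MeasureTheory Filter Topology Finset
open scoped ENNReal

noncomputable section

/-- The rational points of the open simplex `Δ₂`. -/
def Eq2 : Set ↥(oS 2) := {p | ∀ i, ∃ r : ℚ, (p : Fin 2 → ℝ) i = (r : ℝ)}

/-- The parametrization `x ↦ (x, 1−x)` of the closed simplex `Δ̄₂` by `[0,1]`. -/
def toSimplex2 (x : ℝ) : ↥(cS 2) :=
  if h : x ∈ Set.Icc (0 : ℝ) 1 then
    ⟨fun i => if i = 0 then x else 1 - x, by
      refine ⟨fun i => ?_, ?_⟩
      · by_cases hi : i = 0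
        · simpa [hi] using h.1
        · simp only [hi, if_false]
          linarith [h.2]
      · simp [Fin.sum_univ_two]⟩
  else
    ⟨fun i => if i = 0 then 1 else 0, by
      refine ⟨fun i => ?_, ?_⟩
      · by_cases hi : i = 0 <;> simp [hi]
      · simp [Fin.sum_univ_two]⟩

/-- The uniform distribution on the closed simplex `Δ̄₂`. -/
def unif2 : Measure ↥(cS 2) := Measure.map toSimplex2 (volume.restrict (Set.Icc 0 1))

/-- Relative value of a portfolio map defined on the rational points of `Δ₂`. -/
def pVQ (μ : ℕ → ↥(oS 2)) (hr : ∀ t, μ t ∈ Eq2) (π : ↥Eq2 → ↥(cS 2)) : ℕ → ℝ :=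
  relV (fun t => (μ t : Fin 2 → ℝ)) (fun t => (π ⟨μ t, hr t⟩ : Fin 2 → ℝ))

/- ### auxiliary lemmas -/

lemma toSimplex2_coe (x : ℝ) :
    (toSimplex2 x : Fin 2 → ℝ) =
      fun i => if x ∈ Set.Icc (0:ℝ) 1 then (if i = 0 then x else 1 - x)
        else (if i = 0 then 1 else 0) := by
  by_cases h : x ∈ Set.Icc (0:ℝ) 1 <;> simp only [toSimplex2, h, dif_pos, dif_neg,
    not_false_iff, if_true, if_false]

lemma measurable_toSimplex2 : Measurable toSimplex2 := by
  have hmem : ∀ x : ℝ, (fun i : Fin 2 => if x ∈ Set.Icc (0:ℝ) 1 then (if i = 0 then x else 1 - x)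
      else (if i = 0 then 1 else 0)) ∈ cS 2 := fun x => by
    rw [← toSimplex2_coe x]; exact (toSimplex2 x).2
  have heq : toSimplex2 = fun x => (⟨_, hmem x⟩ : ↥(cS 2)) := by
    funext x; exact Subtype.ext (toSimplex2_coe x)
  rw [heq]
  refine Measurable.subtype_mk (measurable_pi_lambda _ fun i => ?_)
  by_cases hi : i = 0 <;> simp only [hi, if_true, if_false] <;>
    exact Measurable.ite measurableSet_Icc (by fun_prop) measurable_const

lemma measurable_coord (i : Fin 2) : Measurable (fun q : ↥(cS 2) => (q : Fin 2 → ℝ) i) :=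
  (measurable_pi_apply i).comp measurable_subtype_coe

lemma unif2_integral (c0 c1 : ℝ) :
    ∫ q : ↥(cS 2), ((q : Fin 2 → ℝ) 0 * c0 + (q : Fin 2 → ℝ) 1 * c1) ∂unif2
      = (c0 + c1) / 2 := by
  have hmeas : Measurable (fun q : ↥(cS 2) => (q : Fin 2 → ℝ) 0 * c0 + (q : Fin 2 → ℝ) 1 * c1) :=
    ((measurable_coord 0).mul_const _).add ((measurable_coord 1).mul_const _)
  rw [unif2, integral_map measurable_toSimplex2.aemeasurable hmeas.aestronglyMeasurable]
  have hcg : ∀ x ∈ Set.Icc (0:ℝ) 1,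
      (toSimplex2 x : Fin 2 → ℝ) 0 * c0 + (toSimplex2 x : Fin 2 → ℝ) 1 * c1
        = c1 + (c0 - c1) * x := by
    intro x hx
    rw [toSimplex2_coe x]
    simp only [hx, if_true, if_pos rfl]
    norm_num
    ring
  rw [setIntegral_congr_fun measurableSet_Icc hcg]
  rw [MeasureTheory.integral_Icc_eq_integral_Ioc, ← intervalIntegral.integral_of_le zero_le_one]
  rw [intervalIntegral.integral_add (intervalIntegrable_const)
    ((intervalIntegral.intervalIntegrable_id).const_mul _),
    intervalIntegral.integral_const, intervalIntegral.integral_const_mul, integral_id]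
  norm_num
  ring

/-- the point `(0,1)` of the closed simplex. -/
def e1 : ↥(cS 2) := ⟨fun i => if i = 0 then 0 else 1, by
  constructor
  · intro i; by_cases hi : i = 0 <;> simp [hi]
  · simp [Fin.sum_univ_two]⟩

/-- Proposition 3.8: failure of universality of Cover's portfolio for the
family `Θ = (Δ̄₂)^E` of all portfolio maps on the rational points `E` of `Δ₂`, with `ν₀` the
infinite product of uniform distributions, along the explicit market path
`μ(0) = (1/2, 1/2)`, `μ(t+1) = (μ₁(t)/(1+δμ₂(t)), (1+δ)μ₂(t)/(1+δμ₂(t)))`. -/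
theorem stmt11 (δ : ℚ) (hδ : 0 < δ)
    (μ : ℕ → ↥(oS 2)) (hr : ∀ t, μ t ∈ Eq2)
    (hμ0 : (μ 0 : Fin 2 → ℝ) 0 = 1 / 2 ∧ (μ 0 : Fin 2 → ℝ) 1 = 1 / 2)
    (hrec : ∀ t,
      (μ (t + 1) : Fin 2 → ℝ) 0 =
        (μ t : Fin 2 → ℝ) 0 / (1 + (δ : ℝ) * (μ t : Fin 2 → ℝ) 1) ∧
      (μ (t + 1) : Fin 2 → ℝ) 1 =
        (1 + (δ : ℝ)) * (μ t : Fin 2 → ℝ) 1 / (1 + (δ : ℝ) * (μ t : Fin 2 → ℝ) 1))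
    (ν0 : Measure (↥Eq2 → ↥(cS 2))) [IsProbabilityMeasure ν0]
    (hprod : ∀ (s : Finset ↥Eq2) (B : ↥Eq2 → Set ↥(cS 2)),
      (∀ p, MeasurableSet (B p)) →
      ν0 {π : ↥Eq2 → ↥(cS 2) | ∀ p ∈ s, π p ∈ B p} = ∏ p ∈ s, unif2 (B p)) :
    AssumptionM (1 + (δ : ℝ)) μ ∧
    (∀ t : ℕ,
      (∫ π : ↥Eq2 → ↥(cS 2), pVQ μ hr π t ∂ν0) =
        ((μ t : Fin 2 → ℝ) 1 / (μ 0 : Fin 2 → ℝ) 1) *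
          (1 - (1 / 2) * ((δ : ℝ) / (1 + (δ : ℝ)))) ^ t) ∧
    (∀ t : ℕ, 0 < t →
      (⨆ π : ↥Eq2 → ↥(cS 2), pVQ μ hr π t) =
        (μ t : Fin 2 → ℝ) 1 / (μ 0 : Fin 2 → ℝ) 1) ∧
    Tendsto (fun t : ℕ =>
        Real.log ((∫ π : ↥Eq2 → ↥(cS 2), pVQ μ hr π t ∂ν0) /
          (⨆ π : ↥Eq2 → ↥(cS 2), pVQ μ hr π t)) / t)
      atTop (𝓝 (Real.log (1 - (1 / 2) * ((δ : ℝ) / (1 + (δ : ℝ)))))) ∧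
    Real.log (1 - (1 / 2) * ((δ : ℝ) / (1 + (δ : ℝ)))) < 0 := by
  have hδ' : (0:ℝ) < (δ:ℝ) := by exact_mod_cast hδ
  -- basic facts about the path
  have hpos : ∀ t i, 0 < (μ t : Fin 2 → ℝ) i := fun t i => (μ t).2.1 i
  have hsum : ∀ t, (μ t : Fin 2 → ℝ) 0 + (μ t : Fin 2 → ℝ) 1 = 1 := by
    intro t
    have := (μ t).2.2
    rwa [Fin.sum_univ_two] at this
  have ha_pos : ∀ t, 0 < (μ t : Fin 2 → ℝ) 1 := fun t => hpos t 1
  have ha_lt1 : ∀ t, (μ t : Fin 2 → ℝ) 1 < 1 := fun t => by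
    have := hpos t 0; have := hsum t; linarith
  have hd_pos : ∀ t, (0:ℝ) < 1 + (δ:ℝ) * (μ t : Fin 2 → ℝ) 1 := fun t => by
    nlinarith [ha_pos t]
  have hd_lt : ∀ t, 1 + (δ:ℝ) * (μ t : Fin 2 → ℝ) 1 < 1 + (δ:ℝ) := fun t => by
    nlinarith [ha_lt1 t, ha_pos t]
  have hd_gt : ∀ t, (1:ℝ) < 1 + (δ:ℝ) * (μ t : Fin 2 → ℝ) 1 := fun t => by
    nlinarith [ha_pos t]
  have hρ0 : ∀ t, (μ (t+1) : Fin 2 → ℝ) 0 / (μ t : Fin 2 → ℝ) 0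
      = 1 / (1 + (δ:ℝ) * (μ t : Fin 2 → ℝ) 1) := by
    intro t
    rw [(hrec t).1]
    have h0 : (μ t : Fin 2 → ℝ) 0 ≠ 0 := (hpos t 0).ne'
    have hd : (1 + (δ:ℝ) * (μ t : Fin 2 → ℝ) 1) ≠ 0 := (hd_pos t).ne'
    field_simp
  have hρ1 : ∀ t, (μ (t+1) : Fin 2 → ℝ) 1 / (μ t : Fin 2 → ℝ) 1
      = (1 + (δ:ℝ)) / (1 + (δ:ℝ) * (μ t : Fin 2 → ℝ) 1) := by
    intro t
    rw [(hrec t).2]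
    have h0 : (μ t : Fin 2 → ℝ) 1 ≠ 0 := (ha_pos t).ne'
    have hd : (1 + (δ:ℝ) * (μ t : Fin 2 → ℝ) 1) ≠ 0 := (hd_pos t).ne'
    field_simp
  have ha_rec : ∀ t, (μ (t+1) : Fin 2 → ℝ) 1
      = (1 + (δ:ℝ)) * (μ t : Fin 2 → ℝ) 1 / (1 + (δ:ℝ) * (μ t : Fin 2 → ℝ) 1) :=
    fun t => (hrec t).2
  -- strict monotonicity and injectivity
  have hmono : StrictMono (fun t => (μ t : Fin 2 → ℝ) 1) := by
    refine strictMono_nat_of_lt_succ fun t => ?_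
    rw [ha_rec t, lt_div_iff₀ (hd_pos t)]
    nlinarith [mul_lt_mul_of_pos_left (ha_lt1 t) (mul_pos hδ' (ha_pos t))]
  -- the points of Eq2 visited by the path
  set P : ℕ → ↥Eq2 := fun t => ⟨μ t, hr t⟩ with hP
  have hPinj : Function.Injective P := by
    intro s t hst
    have : (μ s : Fin 2 → ℝ) 1 = (μ t : Fin 2 → ℝ) 1 := by
      rw [show μ s = μ t from congrArg Subtype.val hst]
    exact hmono.injective this
  -- the per-period factor
  set h : ℕ → ↥(cS 2) → ℝ := fun t q =>
    ∑ i, (q : Fin 2 → ℝ) i * ((μ (t+1) : Fin 2 → ℝ) i / (μ t : Fin 2 → ℝ) i) with hh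
  have hmeas_h : ∀ t, Measurable (h t) := by
    intro t
    refine Finset.measurable_sum _ fun i _ => (measurable_coord i).mul_const _
  have hprodForm : ∀ (π : ↥Eq2 → ↥(cS 2)) t,
      pVQ μ hr π t = ∏ s ∈ Finset.range t, h s (π (P s)) := by
    intro π t
    induction t with
    | zero => simp [pVQ, relV]
    | succ t ih =>
      rw [Finset.prod_range_succ, ← ih]
      rfl
  have hVmeas : ∀ t, Measurable (fun π : ↥Eq2 → ↥(cS 2) => pVQ μ hr π t) := by
    intro t
    have : (fun π : ↥Eq2 → ↥(cS 2) => pVQ μ hr π t)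
        = fun π => ∏ s ∈ Finset.range t, h s (π (P s)) := funext fun π => hprodForm π t
    rw [this]
    exact Finset.measurable_prod _ fun s _ => (hmeas_h s).comp (measurable_pi_apply _)
  -- the marginal of ν0 at each point is unif2
  have hmap : ∀ p : ↥Eq2, Measure.map (fun π : ↥Eq2 → ↥(cS 2) => π p) ν0 = unif2 := by
    intro p
    refine Measure.ext fun C hC => ?_
    rw [Measure.map_apply (measurable_pi_apply p) hC]
    have := hprod {p} (fun _ => C) (fun _ => hC)
    simp at this; exact this
  -- independence of the evaluations
  have hindep : ProbabilityTheory.iIndepFun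
      (fun (p : ↥Eq2) (π : ↥Eq2 → ↥(cS 2)) => π p) ν0 := by
    rw [ProbabilityTheory.iIndepFun_iff_measure_inter_preimage_eq_mul]
    intro S sets hsets
    have hBmeas : ∀ p, MeasurableSet (if p ∈ S then sets p else Set.univ) := by
      intro p
      by_cases hp : p ∈ S
      · simpa [hp] using hsets p hp
      · simp [hp]
    have hkey := hprod S _ hBmeas
    have hset : {π : ↥Eq2 → ↥(cS 2) | ∀ p ∈ S, π p ∈ (if p ∈ S then sets p else Set.univ)}
        = ⋂ p ∈ S, (fun π : ↥Eq2 → ↥(cS 2) => π p) ⁻¹' sets p := by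
      ext π
      simp only [Set.mem_setOf_eq, Set.mem_iInter, Set.mem_preimage]
      exact ⟨fun hp q hq => by simpa [hq] using hp q hq,
        fun hp q hq => by simpa [hq] using hp q hq⟩
    rw [hset] at hkey
    rw [hkey]
    refine Finset.prod_congr rfl fun p hp => ?_
    rw [if_pos hp, ← hmap p, Measure.map_apply (measurable_pi_apply p) (hsets p hp)]
  -- expected value of a single factor
  have hfac : ∀ t, (∫ π : ↥Eq2 → ↥(cS 2), h t (π (P t)) ∂ν0)
      = ((μ (t+1) : Fin 2 → ℝ) 0 / (μ t : Fin 2 → ℝ) 0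
        + (μ (t+1) : Fin 2 → ℝ) 1 / (μ t : Fin 2 → ℝ) 1) / 2 := by
    intro t
    have h1 : (∫ π : ↥Eq2 → ↥(cS 2), h t (π (P t)) ∂ν0)
        = ∫ q, h t q ∂(Measure.map (fun π : ↥Eq2 → ↥(cS 2) => π (P t)) ν0) := by
      rw [integral_map (measurable_pi_apply (P t)).aemeasurable
        ((hmeas_h t).aestronglyMeasurable)]
    rw [h1, hmap (P t)]
    have h2 : (fun q : ↥(cS 2) => h t q)
        = fun q : ↥(cS 2) => (q : Fin 2 → ℝ) 0 * ((μ (t+1) : Fin 2 → ℝ) 0 / (μ t : Fin 2 → ℝ) 0)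
          + (q : Fin 2 → ℝ) 1 * ((μ (t+1) : Fin 2 → ℝ) 1 / (μ t : Fin 2 → ℝ) 1) := by
      funext q
      simp only [hh, Fin.sum_univ_two]
    rw [h2, unif2_integral]

  -- the main integral formula
  have hint : ∀ t, (∫ π : ↥Eq2 → ↥(cS 2), pVQ μ hr π t ∂ν0)
      = ((μ t : Fin 2 → ℝ) 1 / (μ 0 : Fin 2 → ℝ) 1)
        * (1 - (1 / 2) * ((δ : ℝ) / (1 + (δ : ℝ)))) ^ t := by
    intro t
    induction t with
    | zero => simp [pVQ, relV, div_self (ha_pos 0).ne']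
    | succ t ih =>
      have hY : Measurable (fun π : ↥Eq2 → ↥(cS 2) => h t (π (P t))) :=
        (hmeas_h t).comp (measurable_pi_apply _)
      have hXY : ProbabilityTheory.IndepFun (fun π : ↥Eq2 → ↥(cS 2) => pVQ μ hr π t)
          (fun π : ↥Eq2 → ↥(cS 2) => h t (π (P t))) ν0 := by
        set S : Finset ↥Eq2 := (Finset.range t).image P with hS
        have hdisj : Disjoint S {P t} := by
          rw [Finset.disjoint_singleton_right]
          simp only [hS, Finset.mem_image, Finset.mem_range, not_exists, not_and]
          intro s hs hPs
          exact absurd (hPinj hPs) (Nat.ne_of_lt hs)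
        have hbase := hindep.indepFun_finset S {P t} hdisj (fun p => measurable_pi_apply p)
        set F : (S → ↥(cS 2)) → ℝ := fun ρ => ∏ s ∈ (Finset.range t).attach,
          h s.1 (ρ ⟨P s.1, Finset.mem_image_of_mem P s.2⟩) with hF
        set G : (({P t} : Finset ↥Eq2) → ↥(cS 2)) → ℝ :=
          fun ρ => h t (ρ ⟨P t, Finset.mem_singleton_self _⟩) with hG
        have hFm : Measurable F :=
          Finset.measurable_prod _ fun s _ => (hmeas_h s.1).comp (measurable_pi_apply _)
        have hGm : Measurable G := (hmeas_h t).comp (measurable_pi_apply _)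
        have hcomp := hbase.comp hFm hGm
        have hXeq : (fun π : ↥Eq2 → ↥(cS 2) => pVQ μ hr π t)
            = F ∘ (fun π (i : S) => π i) := by
          funext π
          rw [hprodForm π t]
          simp only [hF, Function.comp_apply]
          rw [← Finset.prod_attach (Finset.range t) (fun s => h s (π (P s)))]
        have hYeq : (fun π : ↥Eq2 → ↥(cS 2) => h t (π (P t)))
            = G ∘ (fun π (i : ({P t} : Finset ↥Eq2)) => π i) := rfl
        rw [hXeq, hYeq]
        exact hcomp
      have hsplit : (fun π : ↥Eq2 → ↥(cS 2) => pVQ μ hr π (t+1))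
          = (fun π : ↥Eq2 → ↥(cS 2) => pVQ μ hr π t)
            * (fun π : ↥Eq2 → ↥(cS 2) => h t (π (P t))) := by
        funext π
        rw [Pi.mul_apply, hprodForm π (t+1), hprodForm π t, Finset.prod_range_succ]
      have hI : (∫ π : ↥Eq2 → ↥(cS 2), pVQ μ hr π (t+1) ∂ν0)
          = (∫ π : ↥Eq2 → ↥(cS 2), pVQ μ hr π t ∂ν0)
            * ∫ π : ↥Eq2 → ↥(cS 2), h t (π (P t)) ∂ν0 := by
        calc (∫ π : ↥Eq2 → ↥(cS 2), pVQ μ hr π (t+1) ∂ν0)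
            = ∫ π : ↥Eq2 → ↥(cS 2), ((fun π : ↥Eq2 → ↥(cS 2) => pVQ μ hr π t)
              * (fun π : ↥Eq2 → ↥(cS 2) => h t (π (P t)))) π ∂ν0 := by rw [← hsplit]
          _ = _ := ProbabilityTheory.IndepFun.integral_mul_eq_mul_integral hXY (hVmeas t).aestronglyMeasurable hY.aestronglyMeasurable
      rw [hI, ih, hfac t, hρ0 t, hρ1 t, ha_rec t]
      have h1 : (1 + (δ:ℝ) * (μ t : Fin 2 → ℝ) 1) ≠ 0 := (hd_pos t).ne'
      have h2 : (1:ℝ) + (δ:ℝ) ≠ 0 := by positivity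
      have h3 : (μ 0 : Fin 2 → ℝ) 1 ≠ 0 := (ha_pos 0).ne'
      rw [pow_succ]
      field_simp
      ring
  -- nonnegativity and upper bound for factors
  have hfac_nonneg : ∀ s (q : ↥(cS 2)), 0 ≤ h s q := by
    intro s q
    simp only [hh, Fin.sum_univ_two]
    have hq0 := q.2.1 0
    have hq1 := q.2.1 1
    have r0 := (hρ0 s); have r1 := (hρ1 s)
    have : (0:ℝ) ≤ (μ (s+1) : Fin 2 → ℝ) 0 / (μ s : Fin 2 → ℝ) 0 :=
      le_of_lt (div_pos (hpos (s+1) 0) (hpos s 0))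
    have : (0:ℝ) ≤ (μ (s+1) : Fin 2 → ℝ) 1 / (μ s : Fin 2 → ℝ) 1 :=
      le_of_lt (div_pos (hpos (s+1) 1) (hpos s 1))
    positivity
  have hfac_le : ∀ s (q : ↥(cS 2)), h s q ≤ (μ (s+1) : Fin 2 → ℝ) 1 / (μ s : Fin 2 → ℝ) 1 := by
    intro s q
    simp only [hh, Fin.sum_univ_two]
    have hq0 := q.2.1 0
    have hq1 := q.2.1 1
    have hqs : (q : Fin 2 → ℝ) 0 + (q : Fin 2 → ℝ) 1 = 1 := by
      have := q.2.2; rwa [Fin.sum_univ_two] at this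
    rw [hρ0 s, hρ1 s]
    have hdd : 1/(1 + (δ:ℝ) * (μ s : Fin 2 → ℝ) 1) ≤ (1+(δ:ℝ))/(1 + (δ:ℝ) * (μ s : Fin 2 → ℝ) 1) :=
      (div_le_div_iff_of_pos_right (hd_pos s)).mpr (by linarith)
    calc (q : Fin 2 → ℝ) 0 * (1/(1 + (δ:ℝ) * (μ s : Fin 2 → ℝ) 1))
          + (q : Fin 2 → ℝ) 1 * ((1+(δ:ℝ))/(1 + (δ:ℝ) * (μ s : Fin 2 → ℝ) 1))
        ≤ (q : Fin 2 → ℝ) 0 * ((1+(δ:ℝ))/(1 + (δ:ℝ) * (μ s : Fin 2 → ℝ) 1))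
          + (q : Fin 2 → ℝ) 1 * ((1+(δ:ℝ))/(1 + (δ:ℝ) * (μ s : Fin 2 → ℝ) 1)) := by
          gcongr
      _ = (1+(δ:ℝ))/(1 + (δ:ℝ) * (μ s : Fin 2 → ℝ) 1) := by
          rw [← add_mul, hqs, one_mul]
  -- telescoping product
  have htel : ∀ t, (∏ s ∈ Finset.range t, ((μ (s+1) : Fin 2 → ℝ) 1 / (μ s : Fin 2 → ℝ) 1))
      = (μ t : Fin 2 → ℝ) 1 / (μ 0 : Fin 2 → ℝ) 1 := by
    intro t
    induction t with
    | zero => simp [div_self (ha_pos 0).ne']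
    | succ t ih =>
      rw [Finset.prod_range_succ, ih]
      have h1 : (μ t : Fin 2 → ℝ) 1 ≠ 0 := (ha_pos t).ne'
      have h3 : (μ 0 : Fin 2 → ℝ) 1 ≠ 0 := (ha_pos 0).ne'
      field_simp
  haveI : Nonempty ↥(cS 2) := ⟨e1⟩
  have he1 : ∀ s, h s e1 = (μ (s+1) : Fin 2 → ℝ) 1 / (μ s : Fin 2 → ℝ) 1 := by
    intro s
    simp only [hh, Fin.sum_univ_two]
    simp [e1]
  have hub : ∀ (t : ℕ) (π : ↥Eq2 → ↥(cS 2)),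
      pVQ μ hr π t ≤ (μ t : Fin 2 → ℝ) 1 / (μ 0 : Fin 2 → ℝ) 1 := by
    intro t π
    rw [hprodForm π t, ← htel t]
    exact Finset.prod_le_prod (fun s _ => hfac_nonneg s _) (fun s _ => hfac_le s _)
  have hstar : ∀ t, pVQ μ hr (fun _ => e1) t = (μ t : Fin 2 → ℝ) 1 / (μ 0 : Fin 2 → ℝ) 1 := by
    intro t
    rw [hprodForm _ t, ← htel t]
    exact Finset.prod_congr rfl fun s _ => he1 s
  have hsup : ∀ t : ℕ, (⨆ π : ↥Eq2 → ↥(cS 2), pVQ μ hr π t)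
      = (μ t : Fin 2 → ℝ) 1 / (μ 0 : Fin 2 → ℝ) 1 := by
    intro t
    refine le_antisymm (ciSup_le (hub t)) ?_
    have hbdd : BddAbove (Set.range fun π : ↥Eq2 → ↥(cS 2) => pVQ μ hr π t) := by
      refine ⟨(μ t : Fin 2 → ℝ) 1 / (μ 0 : Fin 2 → ℝ) 1, ?_⟩
      rintro x ⟨π, rfl⟩
      exact hub t π
    calc (μ t : Fin 2 → ℝ) 1 / (μ 0 : Fin 2 → ℝ) 1 = pVQ μ hr (fun _ => e1) t := (hstar t).symm
      _ ≤ _ := le_ciSup hbdd (fun _ => e1)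
  -- the constant c
  have hc1 : (δ:ℝ) / (1 + (δ:ℝ)) < 1 := by
    rw [div_lt_one (by positivity)]; linarith
  have hc2 : (0:ℝ) < (δ:ℝ) / (1 + (δ:ℝ)) := by positivity
  have hc_pos : (0:ℝ) < 1 - (1 / 2) * ((δ : ℝ) / (1 + (δ : ℝ))) := by linarith
  have hc_lt1 : 1 - (1 / 2) * ((δ : ℝ) / (1 + (δ : ℝ))) < 1 := by linarith
  refine ⟨?_, hint, fun t _ => hsup t, ?_, Real.log_neg hc_pos hc_lt1⟩
  · -- Assumption M
    intro t i
    fin_cases i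
    · simp only [Fin.zero_eta, Fin.mk_one]
      rw [hρ0 t]
      constructor
      · rw [div_le_div_iff₀ (by positivity) (hd_pos t)]
        nlinarith [hd_lt t]
      · rw [div_le_iff₀ (hd_pos t)]
        nlinarith [hd_gt t, hδ']
    · simp only [Fin.zero_eta, Fin.mk_one]
      rw [hρ1 t]
      constructor
      · rw [div_le_div_iff₀ (by positivity) (hd_pos t)]
        nlinarith [hd_lt t, hδ']
      · rw [div_le_iff₀ (hd_pos t)]
        nlinarith [hd_gt t, hδ']
  · -- the limit
    refine Tendsto.congr' ?_ tendsto_const_nhds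
    filter_upwards [eventually_ge_atTop 1] with t ht
    rw [hint t, hsup t]
    have hA : (0:ℝ) < (μ t : Fin 2 → ℝ) 1 / (μ 0 : Fin 2 → ℝ) 1 :=
      div_pos (ha_pos t) (ha_pos 0)
    rw [mul_div_cancel_left₀ _ hA.ne', Real.log_pow]
    have ht0 : (t:ℝ) ≠ 0 := Nat.cast_ne_zero.mpr (by omega)
    exact (mul_div_cancel_left₀ _ ht0).symm
end
end

section
/- Suppose the portfolio map π: Δ_n → Δ̄_n is generated by the positive concave function Φ: Δ_n → (0,∞), i.e., Σ_i π_i(p) q_i/p_i ≥ Φ(q)/Φ(p) for all p, q ∈ Δ_n. Then for every p ∈ Δ_n, the vector v = (v_1,…,v_n) defined by v_i = π_i(p)/p_i − (1/n) Σ_{j=1}^n π_j(p)/p_j satisfies Σ_{i=1}^n v_i = 0 and is a supergradient of log Φ at p, i.e., log Φ(p) + ⟨v, q − p⟩ ≥ log Φ(q) for all q ∈ Δ_n. -/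
open MeasureTheory Filter Topology Finset

noncomputable section

/-- Lemma 4.1(i): if `π` is generated by the positive concave function `Φ`,
then `v_i = π_i(p)/p_i − (1/n) Σ_j π_j(p)/p_j` is a supergradient of `log Φ` at `p`. -/
theorem stmt13 {n : ℕ} (hn : 2 ≤ n)
    (π : ↥(oS n) → ↥(cS n)) (Φ : (Fin n → ℝ) → ℝ)
    (hpos : ∀ p ∈ oS n, 0 < Φ p) (hconc : ConcaveOn ℝ (oS n) Φ)
    (hgen : ∀ p q : ↥(oS n),
      Φ (q : Fin n → ℝ) / Φ (p : Fin n → ℝ) ≤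
        ∑ i, (π p : Fin n → ℝ) i * ((q : Fin n → ℝ) i / (p : Fin n → ℝ) i)) :
    ∀ p : ↥(oS n),
      (∑ i, ((π p : Fin n → ℝ) i / (p : Fin n → ℝ) i -
          (1 / n) * ∑ j, (π p : Fin n → ℝ) j / (p : Fin n → ℝ) j) = 0) ∧
      ∀ q : ↥(oS n),
        Real.log (Φ (q : Fin n → ℝ)) ≤ Real.log (Φ (p : Fin n → ℝ)) +
          ∑ i, ((π p : Fin n → ℝ) i / (p : Fin n → ℝ) i -
              (1 / n) * ∑ j, (π p : Fin n → ℝ) j / (p : Fin n → ℝ) j) *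
            ((q : Fin n → ℝ) i - (p : Fin n → ℝ) i) := by
  intro p
  have hnn : (n:ℝ) ≠ 0 := by positivity
  have hp := p.2
  obtain ⟨hp1, hp2⟩ := hp
  constructor
  · rw [Finset.sum_sub_distrib, Finset.sum_const, card_univ, Fintype.card_fin,
      nsmul_eq_mul]
    field_simp
    ring
  · intro q
    obtain ⟨hq1, hq2⟩ := q.2
    have hπ := (π p).2
    obtain ⟨hπ1, hπ2⟩ := hπ
    set S := ∑ i, (π p : Fin n → ℝ) i * ((q : Fin n → ℝ) i / (p : Fin n → ℝ) i) with hS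
    have hΦp := hpos _ p.2
    have hΦq := hpos _ q.2
    have hSpos : 0 < S := lt_of_lt_of_le (div_pos hΦq hΦp) (hgen p q)
    have h1 : Real.log (Φ q) - Real.log (Φ p) ≤ Real.log S := by
      rw [← Real.log_div (ne_of_gt hΦq) (ne_of_gt hΦp)]
      exact Real.log_le_log (div_pos hΦq hΦp) (hgen p q)
    have h2 : Real.log S ≤ S - 1 := Real.log_le_sub_one_of_pos hSpos
    have h3 : S - 1 = ∑ i, ((π p : Fin n → ℝ) i / (p : Fin n → ℝ) i -
        (1 / n) * ∑ j, (π p : Fin n → ℝ) j / (p : Fin n → ℝ) j) *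
          ((q : Fin n → ℝ) i - (p : Fin n → ℝ) i) := by
      have key : ∀ i : Fin n, ((π p : Fin n → ℝ) i / (p : Fin n → ℝ) i -
          (1 / n) * ∑ j, (π p : Fin n → ℝ) j / (p : Fin n → ℝ) j) *
            ((q : Fin n → ℝ) i - (p : Fin n → ℝ) i)
          = (π p : Fin n → ℝ) i * ((q : Fin n → ℝ) i / (p : Fin n → ℝ) i)
            - (π p : Fin n → ℝ) i
            - ((1 / n) * ∑ j, (π p : Fin n → ℝ) j / (p : Fin n → ℝ) j) *
              ((q : Fin n → ℝ) i - (p : Fin n → ℝ) i) := by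
        intro i
        have hpi := (hp1 i).ne'
        field_simp
      rw [Finset.sum_congr rfl (fun i _ => key i)]
      rw [Finset.sum_sub_distrib, Finset.sum_sub_distrib, ← Finset.mul_sum,
        Finset.sum_sub_distrib, hq2, hp2, hπ2]
      ring
    linarith
end
end
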